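/- arXiv:1001.0714 — 4 statements merged into one kernel-verified Lean document; each statement's English description precedes it below -/
import Mathlib

section
/- For a convex body K in ℝⁿ, an interior point x of K is the Santaló point of K if and only if 0 is the centroid of (K − x)^∘. -/
open MeasureTheory Real Set
open scoped ENNReal Pointwise RealInnerProductSpace

/-- The centroid (center of gravity) of a set `K`: `(1/vol K) ∫_K x dx`. -/
noncomputable def centroid {E : Type*} [NormedAddCommGroup E] [NormedSpace ℝ E]
    [MeasureSpace E] (K : Set E) : E :=
  ((volume K).toReal)⁻¹ • ∫ x in K, x

/-- The polar of `K` with respect to `x`: `K^x = (K - x)^∘ = {y : ⟨y, z - x⟩ ≤ 1 ∀ z ∈ K}`. -/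
def polarAt {n : ℕ} (K : Set (EuclideanSpace ℝ (Fin n)))
    (x : EuclideanSpace ℝ (Fin n)) : Set (EuclideanSpace ℝ (Fin n)) :=
  {y | ∀ z ∈ K, ⟪y, z - x⟫ ≤ 1}

/-- `x` is a Santaló point of `K`: an interior point of `K` at which
`vol(K)·vol(K^x)` attains its minimum over interior points. -/
def IsSantaloPoint {n : ℕ} (K : Set (EuclideanSpace ℝ (Fin n)))
    (x : EuclideanSpace ℝ (Fin n)) : Prop :=
  x ∈ interior K ∧
    ∀ y ∈ interior K, volume K * volume (polarAt K x) ≤ volume K * volume (polarAt K y)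

lemma lintegral_pow_exp (m : ℕ) :
    ∫⁻ t in Set.Ioi (0:ℝ), ENNReal.ofReal (t ^ m * Real.exp (-t)) = (Nat.factorial m : ℝ≥0∞) := by
  have h1 : (0:ℝ) < (m:ℝ) + 1 := by positivity
  have hint := Real.GammaIntegral_convergent h1
  have hcong : ∀ x ∈ Set.Ioi (0:ℝ),
      Real.exp (-x) * x ^ ((m:ℝ) + 1 - 1) = x ^ m * Real.exp (-x) := by
    intro x _
    rw [add_sub_cancel_right, Real.rpow_natCast, mul_comm]
  have hint' : IntegrableOn (fun t : ℝ => t ^ m * Real.exp (-t)) (Set.Ioi 0) := by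
    refine hint.congr_fun hcong measurableSet_Ioi
  rw [← ofReal_integral_eq_lintegral_ofReal hint'
    ((ae_restrict_iff' measurableSet_Ioi).2 (Filter.Eventually.of_forall fun x hx => by have : (0:ℝ) < x := hx; positivity))]
  rw [show (∫ t in Set.Ioi (0:ℝ), t ^ m * Real.exp (-t)) = Real.Gamma ((m:ℝ) + 1) by
    rw [Real.Gamma_eq_integral h1]
    exact (setIntegral_congr_fun measurableSet_Ioi hcong).symm]
  rw [Real.Gamma_nat_eq_factorial]
  exact ENNReal.ofReal_natCast _

lemma ofReal_exp_layer (c a : ℝ) (hc : 0 ≤ c) :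
    ENNReal.ofReal (c * Real.exp (-a)) = ∫⁻ t in Set.Ioi a, ENNReal.ofReal (c * Real.exp (-t)) := by
  have hi : IntegrableOn (fun t : ℝ => c * Real.exp (-t)) (Set.Ioi a) := by
    have := (exp_neg_integrableOn_Ioi a (one_pos)).const_mul c
    simpa [neg_one_mul, IntegrableOn] using this
  rw [← ofReal_integral_eq_lintegral_ofReal hi
    ((ae_restrict_iff' measurableSet_Ioi).2 (Filter.Eventually.of_forall fun x hx => by positivity))]
  rw [integral_const_mul, integral_exp_neg_Ioi]

lemma setLIntegral_smul_set {n : ℕ} {t : ℝ} (ht : 0 < t) (S : Set (EuclideanSpace ℝ (Fin n)))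
    (hS : MeasurableSet S) {g : EuclideanSpace ℝ (Fin n) → ℝ≥0∞} (hg : Measurable g) :
    ∫⁻ w in t • S, g w = ENNReal.ofReal (t ^ n) * ∫⁻ v in S, g (t • v) := by
  have htn : t ≠ 0 := ht.ne'
  have hts : MeasurableSet (t • S) := by
    have h1 : t • S = (fun w : EuclideanSpace ℝ (Fin n) => t⁻¹ • w) ⁻¹' S := by
      ext w
      simp [Set.mem_smul_set_iff_inv_smul_mem₀ htn]
    rw [h1]
    exact hS.preimage (measurable_const_smul _)
  have hmap := MeasureTheory.Measure.map_addHaar_smul (volume : Measure (EuclideanSpace ℝ (Fin n))) htn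
  have hpre : (fun x : EuclideanSpace ℝ (Fin n) => t • x) ⁻¹' (t • S) = S := by
    ext w
    simp [Set.smul_mem_smul_set_iff₀ htn]
  have key := setLIntegral_map (μ := (volume : Measure (EuclideanSpace ℝ (Fin n)))) (f := g) (g := fun x : EuclideanSpace ℝ (Fin n) => t • x)
    hts hg (measurable_const_smul t)
  rw [hmap, hpre] at key
  rw [Measure.restrict_smul, lintegral_smul_measure] at key
  have hfr : Module.finrank ℝ (EuclideanSpace ℝ (Fin n)) = n := finrank_euclideanSpace_fin
  rw [hfr] at key
  have hpos : (0:ℝ) < t ^ n := pow_pos ht n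
  have hofr : ENNReal.ofReal |(t ^ n)⁻¹| = (ENNReal.ofReal (t ^ n))⁻¹ := by
    rw [abs_of_nonneg (by positivity), ENNReal.ofReal_inv_of_pos hpos]
  rw [hofr] at key
  have hne0 : ENNReal.ofReal (t ^ n) ≠ 0 := by
    simp [ENNReal.ofReal_eq_zero, not_le, hpos]
  have hnetop : ENNReal.ofReal (t ^ n) ≠ ⊤ := ENNReal.ofReal_ne_top
  calc ∫⁻ w in t • S, g w
      = (ENNReal.ofReal (t ^ n) * (ENNReal.ofReal (t ^ n))⁻¹) * ∫⁻ w in t • S, g w := by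
        rw [ENNReal.mul_inv_cancel hne0 hnetop, one_mul]
    _ = ENNReal.ofReal (t ^ n) * ((ENNReal.ofReal (t ^ n))⁻¹ * ∫⁻ w in t • S, g w) := by
        rw [mul_assoc]
    _ = ENNReal.ofReal (t ^ n) * ∫⁻ v in S, g (t • v) := by rw [← key, smul_eq_mul]

section Homog

variable {n : ℕ} {q ℓ : EuclideanSpace ℝ (Fin n) → ℝ} {k : ℕ}

lemma sublevel_scale (hq : Continuous q)
    (hqh : ∀ t : ℝ, 0 < t → ∀ w, q (t • w) = t * q w)
    {t : ℝ} (ht : 0 < t) :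
    {w : EuclideanSpace ℝ (Fin n) | q w < t} = t • {w | q w < 1} := by
  ext w
  rw [Set.mem_smul_set_iff_inv_smul_mem₀ ht.ne']
  simp only [Set.mem_setOf_eq]
  rw [hqh t⁻¹ (by positivity)]
  rw [inv_mul_lt_one₀ ht]

lemma scale_int (hq : Continuous q) (hℓ : Continuous ℓ) (hℓ0 : ∀ w, 0 ≤ ℓ w)
    (hqh : ∀ t : ℝ, 0 < t → ∀ w, q (t • w) = t * q w)
    (hℓh : ∀ t : ℝ, 0 < t → ∀ w, ℓ (t • w) = t ^ k * ℓ w)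
    {t : ℝ} (ht : 0 < t) :
    ∫⁻ w in {w : EuclideanSpace ℝ (Fin n) | q w < t}, ENNReal.ofReal (ℓ w)
      = ENNReal.ofReal (t ^ (n + k)) *
        ∫⁻ w in {w : EuclideanSpace ℝ (Fin n) | q w < 1}, ENNReal.ofReal (ℓ w) := by
  rw [sublevel_scale hq hqh ht]
  rw [setLIntegral_smul_set ht _ ((isOpen_lt hq continuous_const).measurableSet)
    (show Measurable fun w : EuclideanSpace ℝ (Fin n) => ENNReal.ofReal (ℓ w) from
      ENNReal.measurable_ofReal.comp hℓ.measurable)]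
  have : ∀ v : EuclideanSpace ℝ (Fin n),
      ENNReal.ofReal (ℓ (t • v)) = ENNReal.ofReal (t ^ k) * ENNReal.ofReal (ℓ v) := by
    intro v
    rw [hℓh t ht v, ENNReal.ofReal_mul (by positivity)]
  simp_rw [this]
  rw [lintegral_const_mul' _ _ ENNReal.ofReal_ne_top, ← mul_assoc,
    ← ENNReal.ofReal_mul (by positivity), ← pow_add]

lemma homog_lintegral (hq : Continuous q) (hℓ : Continuous ℓ) (hℓ0 : ∀ w, 0 ≤ ℓ w)
    (hqh : ∀ t : ℝ, 0 < t → ∀ w, q (t • w) = t * q w)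
    (hℓh : ∀ t : ℝ, 0 < t → ∀ w, ℓ (t • w) = t ^ k * ℓ w)
    (hq0 : ∀ w, 0 ≤ q w) :
    ∫⁻ w, ENNReal.ofReal (ℓ w * Real.exp (-q w)) =
      (Nat.factorial (n + k) : ℝ≥0∞) *
        ∫⁻ w in {w : EuclideanSpace ℝ (Fin n) | q w < 1}, ENNReal.ofReal (ℓ w) := by
  set I₁ := ∫⁻ w in {w : EuclideanSpace ℝ (Fin n) | q w < 1}, ENNReal.ofReal (ℓ w) with hI₁
  set U : Set (EuclideanSpace ℝ (Fin n) × ℝ) := {p | q p.1 < p.2} with hU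
  have hUopen : IsOpen U := by
    have : U = (fun p : EuclideanSpace ℝ (Fin n) × ℝ => p.2 - q p.1) ⁻¹' Set.Ioi 0 := by
      ext p; simp [hU, sub_pos]
    rw [this]
    exact isOpen_Ioi.preimage (continuous_snd.sub (hq.comp continuous_fst))
  set G : EuclideanSpace ℝ (Fin n) × ℝ → ℝ≥0∞ :=
    fun p => U.indicator (fun p => ENNReal.ofReal (ℓ p.1 * Real.exp (-p.2))) p with hG
  have hGmeas : Measurable G :=
    (Measurable.indicator
      (ENNReal.measurable_ofReal.comp
        ((hℓ.comp continuous_fst).mul ((continuous_snd.neg).rexp)).measurable)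
      hUopen.measurableSet)
  have step1 : ∀ w, ENNReal.ofReal (ℓ w * Real.exp (-q w))
      = ∫⁻ t in Set.Ioi (0:ℝ), G (w, t) := by
    intro w
    rw [ofReal_exp_layer (ℓ w) (q w) (hℓ0 w)]
    have hGw : ∀ t : ℝ, G (w, t)
        = (Set.Ioi (q w)).indicator (fun t => ENNReal.ofReal (ℓ w * Real.exp (-t))) t := by
      intro t
      simp only [hG, Set.indicator_apply, hU, Set.mem_setOf_eq, Set.mem_Ioi]
    simp_rw [hGw]
    rw [lintegral_indicator measurableSet_Ioi, Measure.restrict_restrict measurableSet_Ioi,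
      Set.inter_eq_self_of_subset_left (Set.Ioi_subset_Ioi (hq0 w))]
  calc ∫⁻ w, ENNReal.ofReal (ℓ w * Real.exp (-q w))
      = ∫⁻ w, ∫⁻ t in Set.Ioi (0:ℝ), G (w, t) := by simp_rw [step1]
    _ = ∫⁻ t in Set.Ioi (0:ℝ), ∫⁻ w, G (w, t) := by
        exact lintegral_lintegral_swap (hGmeas.aemeasurable)
    _ = ∫⁻ t in Set.Ioi (0:ℝ), ENNReal.ofReal (t ^ (n + k) * Real.exp (-t)) * I₁ := by
        refine setLIntegral_congr_fun measurableSet_Ioi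
          (fun t ht => ?_)
        have h1 : ∀ w, G (w, t)
            = {w : EuclideanSpace ℝ (Fin n) | q w < t}.indicator
                (fun w => ENNReal.ofReal (ℓ w * Real.exp (-t))) w := by
          intro w
          simp only [hG, Set.indicator_apply, hU, Set.mem_setOf_eq]
        simp_rw [h1]
        rw [lintegral_indicator ((isOpen_lt hq continuous_const).measurableSet)]
        have h2 : ∀ w, ENNReal.ofReal (ℓ w * Real.exp (-t))
            = ENNReal.ofReal (ℓ w) * ENNReal.ofReal (Real.exp (-t)) :=
          fun w => ENNReal.ofReal_mul (hℓ0 w)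
        simp_rw [h2]
        rw [lintegral_mul_const' _ _ ENNReal.ofReal_ne_top]
        rw [scale_int hq hℓ hℓ0 hqh hℓh ht, ← hI₁]
        rw [ENNReal.ofReal_mul (by have : (0:ℝ) < t := ht; positivity)]
        ring
    _ = (Nat.factorial (n + k) : ℝ≥0∞) * I₁ := by
        rw [lintegral_mul_const''
          (f := fun t : ℝ => ENNReal.ofReal (t ^ (n + k) * Real.exp (-t))) I₁
          ((ENNReal.continuous_ofReal.comp ((continuous_pow _).mul
            (Real.continuous_exp.comp continuous_neg))).measurable).aemeasurable,
          lintegral_pow_exp, mul_comm]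

lemma sublevel_subset_ball {ε : ℝ} (hε : 0 < ε) (hlow : ∀ w, ε * ‖w‖ ≤ q w) :
    {w : EuclideanSpace ℝ (Fin n) | q w ≤ 1} ⊆ Metric.closedBall 0 ε⁻¹ := by
  intro w hw
  rw [Metric.mem_closedBall, dist_zero_right]
  have h1 : ε * ‖w‖ ≤ 1 := (hlow w).trans hw
  have : ‖w‖ = ε⁻¹ * (ε * ‖w‖) := by field_simp
  rw [this]
  calc ε⁻¹ * (ε * ‖w‖) ≤ ε⁻¹ * 1 := by
        exact mul_le_mul_of_nonneg_left h1 (by positivity)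
    _ = ε⁻¹ := mul_one _

lemma sublevel_int_finite (hℓ : Continuous ℓ) {ε : ℝ} (hε : 0 < ε)
    (hlow : ∀ w, ε * ‖w‖ ≤ q w) :
    ∫⁻ w in {w : EuclideanSpace ℝ (Fin n) | q w ≤ 1}, ENNReal.ofReal (ℓ w) < ⊤ := by
  obtain ⟨C, hC⟩ := (isCompact_closedBall (0 : EuclideanSpace ℝ (Fin n)) ε⁻¹).exists_bound_of_continuousOn
    hℓ.continuousOn
  calc ∫⁻ w in {w : EuclideanSpace ℝ (Fin n) | q w ≤ 1}, ENNReal.ofReal (ℓ w)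
      ≤ ∫⁻ w in Metric.closedBall 0 ε⁻¹, ENNReal.ofReal (ℓ w) :=
        lintegral_mono_set (sublevel_subset_ball hε hlow)
    _ ≤ ∫⁻ _ in Metric.closedBall (0 : EuclideanSpace ℝ (Fin n)) ε⁻¹, ENNReal.ofReal C := by
        refine setLIntegral_mono (by measurability) fun w hw => ?_
        refine ENNReal.ofReal_le_ofReal ((le_abs_self _).trans ?_)
        simpa [Real.norm_eq_abs] using hC w hw
    _ = ENNReal.ofReal C * volume (Metric.closedBall (0 : EuclideanSpace ℝ (Fin n)) ε⁻¹) := by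
        rw [setLIntegral_const]
    _ < ⊤ := ENNReal.mul_lt_top ENNReal.ofReal_lt_top measure_closedBall_lt_top

lemma sublevel_le_eq_lt (hq : Continuous q) (hℓ : Continuous ℓ) (hℓ0 : ∀ w, 0 ≤ ℓ w)
    (hqh : ∀ t : ℝ, 0 < t → ∀ w, q (t • w) = t * q w)
    (hℓh : ∀ t : ℝ, 0 < t → ∀ w, ℓ (t • w) = t ^ k * ℓ w)
    {ε : ℝ} (hε : 0 < ε) (hlow : ∀ w, ε * ‖w‖ ≤ q w) :
    ∫⁻ w in {w : EuclideanSpace ℝ (Fin n) | q w ≤ 1}, ENNReal.ofReal (ℓ w)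
      = ∫⁻ w in {w : EuclideanSpace ℝ (Fin n) | q w < 1}, ENNReal.ofReal (ℓ w) := by
  set a := ∫⁻ w in {w : EuclideanSpace ℝ (Fin n) | q w ≤ 1}, ENNReal.ofReal (ℓ w) with ha
  set b := ∫⁻ w in {w : EuclideanSpace ℝ (Fin n) | q w < 1}, ENNReal.ofReal (ℓ w) with hb
  have hba : b ≤ a := lintegral_mono_set (fun w hw => by
    simp only [Set.mem_setOf_eq] at hw ⊢; exact hw.le)
  have hafin : a ≠ ⊤ := (sublevel_int_finite hℓ hε hlow).ne
  have hbfin : b ≠ ⊤ := (hba.trans_lt (sublevel_int_finite hℓ hε hlow)).ne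
  refine le_antisymm ?_ hba
  have key : ∀ t : ℝ, t ∈ Set.Ioc (1:ℝ) 2 → a.toReal ≤ t ^ (n + k) * b.toReal := by
    intro t ht
    have h1 : a ≤ ENNReal.ofReal (t ^ (n + k)) * b := by
      calc a ≤ ∫⁻ w in {w : EuclideanSpace ℝ (Fin n) | q w < t}, ENNReal.ofReal (ℓ w) :=
            lintegral_mono_set (fun w hw => lt_of_le_of_lt hw ht.1)
        _ = ENNReal.ofReal (t ^ (n + k)) * b :=
            scale_int hq hℓ hℓ0 hqh hℓh (lt_trans one_pos ht.1)
    have htp : (0:ℝ) < t := lt_trans one_pos ht.1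
    have h2 : (ENNReal.ofReal (t ^ (n + k)) * b).toReal = t ^ (n + k) * b.toReal := by
      rw [ENNReal.toReal_mul, ENNReal.toReal_ofReal (by positivity)]
    calc a.toReal ≤ (ENNReal.ofReal (t ^ (n + k)) * b).toReal :=
          ENNReal.toReal_mono (ENNReal.mul_ne_top ENNReal.ofReal_ne_top hbfin) h1
      _ = t ^ (n + k) * b.toReal := h2
  have htend : Filter.Tendsto (fun t : ℝ => t ^ (n + k) * b.toReal) (nhdsWithin 1 (Set.Ioi 1))
      (nhds b.toReal) := by
    have h0 : Filter.Tendsto (fun t : ℝ => t ^ (n + k) * b.toReal) (nhds 1)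
        (nhds (1 ^ (n + k) * b.toReal)) :=
      ((continuous_pow (n + k)).mul continuous_const).tendsto 1
    rw [one_pow, one_mul] at h0
    exact h0.mono_left nhdsWithin_le_nhds
  have hev : ∀ᶠ t : ℝ in nhdsWithin 1 (Set.Ioi 1), a.toReal ≤ t ^ (n + k) * b.toReal := by
    filter_upwards [Ioc_mem_nhdsGT_of_mem ⟨le_refl (1:ℝ), one_lt_two⟩] with t ht
    exact key t ht
  have := ge_of_tendsto htend hev
  exact (ENNReal.toReal_le_toReal hafin hbfin).1 this

end Homog

section Support

open scoped RealInnerProductSpace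

variable {n : ℕ} {K : Set (EuclideanSpace ℝ (Fin n))}

/-- Support function of `K`. -/
noncomputable def supK (K : Set (EuclideanSpace ℝ (Fin n)))
    (w : EuclideanSpace ℝ (Fin n)) : ℝ :=
  sSup ((fun z => ⟪w, z⟫) '' K)

lemma supK_bddAbove (hK : IsCompact K) (w : EuclideanSpace ℝ (Fin n)) :
    BddAbove ((fun z => ⟪w, z⟫) '' K) :=
  (hK.image (continuous_const.inner continuous_id)).bddAbove

lemma le_supK (hK : IsCompact K) {z : EuclideanSpace ℝ (Fin n)} (hz : z ∈ K)
    (w : EuclideanSpace ℝ (Fin n)) : ⟪w, z⟫ ≤ supK K w :=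
  le_csSup (supK_bddAbove hK w) ⟨z, hz, rfl⟩

lemma supK_le (hne : K.Nonempty) {w : EuclideanSpace ℝ (Fin n)} {a : ℝ}
    (h : ∀ z ∈ K, ⟪w, z⟫ ≤ a) : supK K w ≤ a :=
  csSup_le (hne.image _) (by rintro _ ⟨z, hz, rfl⟩; exact h z hz)

lemma supK_smul (hK : IsCompact K) (hne : K.Nonempty) {t : ℝ} (ht : 0 < t)
    (w : EuclideanSpace ℝ (Fin n)) : supK K (t • w) = t * supK K w := by
  refine le_antisymm ?_ ?_
  · refine supK_le hne fun z hz => ?_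
    rw [real_inner_smul_left]
    exact mul_le_mul_of_nonneg_left (le_supK hK hz w) ht.le
  · have h1 : supK K w ≤ t⁻¹ * supK K (t • w) := by
      refine supK_le hne fun z hz => ?_
      have h2 : ⟪w, z⟫ = t⁻¹ * ⟪t • w, z⟫ := by
        rw [real_inner_smul_left]; field_simp
      rw [h2]
      exact mul_le_mul_of_nonneg_left (le_supK hK hz (t • w)) (by positivity)
    calc t * supK K w ≤ t * (t⁻¹ * supK K (t • w)) := mul_le_mul_of_nonneg_left h1 ht.le
      _ = supK K (t • w) := by field_simp

lemma supK_continuous (hK : IsCompact K) (hne : K.Nonempty) : Continuous (supK K) := by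
  obtain ⟨R₀, hR₀⟩ := hK.isBounded.subset_closedBall 0
  set R : ℝ := max R₀ 0 with hR
  have hRnn : 0 ≤ R := le_max_right _ _
  have hzR : ∀ z ∈ K, ‖z‖ ≤ R := by
    intro z hz
    have := hR₀ hz
    rw [Metric.mem_closedBall, dist_zero_right] at this
    exact this.trans (le_max_left _ _)
  have hkey : ∀ w₁ w₂ : EuclideanSpace ℝ (Fin n), supK K w₁ ≤ supK K w₂ + R * ‖w₁ - w₂‖ := by
    intro w₁ w₂
    refine supK_le hne fun z hz => ?_
    have h1 : ⟪w₁, z⟫ = ⟪w₂, z⟫ + ⟪w₁ - w₂, z⟫ := by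
      rw [← inner_add_left, add_sub_cancel]
    rw [h1]
    have h2 : ⟪w₁ - w₂, z⟫ ≤ ‖w₁ - w₂‖ * ‖z‖ := real_inner_le_norm _ _
    have h3 : ‖w₁ - w₂‖ * ‖z‖ ≤ ‖w₁ - w₂‖ * R := by
      exact mul_le_mul_of_nonneg_left (hzR z hz) (norm_nonneg _)
    have h4 := le_supK hK hz w₂
    nlinarith [norm_nonneg (w₁ - w₂)]
  have hlip : LipschitzWith R.toNNReal (supK K) := by
    refine LipschitzWith.of_dist_le_mul fun w₁ w₂ => ?_
    rw [Real.dist_eq, abs_sub_le_iff]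
    have hc : (R.toNNReal : ℝ) = R := Real.coe_toNNReal _ hRnn
    rw [hc]
    constructor
    · have := hkey w₁ w₂
      rw [← dist_eq_norm] at this
      linarith
    · have := hkey w₂ w₁
      rw [← dist_eq_norm, dist_comm] at this
      linarith
  exact hlip.continuous

/-- `q` function: support function of `K - y`. -/
noncomputable def qf (K : Set (EuclideanSpace ℝ (Fin n))) (y w : EuclideanSpace ℝ (Fin n)) : ℝ :=
  supK K w - ⟪w, y⟫

lemma qf_continuous (hK : IsCompact K) (hne : K.Nonempty) (y : EuclideanSpace ℝ (Fin n)) :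
    Continuous (qf K y) :=
  (supK_continuous hK hne).sub (continuous_id.inner continuous_const)

lemma qf_smul (hK : IsCompact K) (hne : K.Nonempty) (y : EuclideanSpace ℝ (Fin n))
    {t : ℝ} (ht : 0 < t) (w : EuclideanSpace ℝ (Fin n)) :
    qf K y (t • w) = t * qf K y w := by
  unfold qf
  rw [supK_smul hK hne ht, real_inner_smul_left]
  ring

lemma polarAt_eq_qf (hK : IsCompact K) (hne : K.Nonempty) (y : EuclideanSpace ℝ (Fin n)) :
    polarAt K y = {w | qf K y w ≤ 1} := by
  ext w
  simp only [polarAt, Set.mem_setOf_eq, qf, sub_le_iff_le_add]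
  constructor
  · intro h
    refine supK_le hne fun z hz => ?_
    have := h z hz
    rw [inner_sub_right] at this
    linarith
  · intro h z hz
    rw [inner_sub_right]
    have := (le_supK hK hz w).trans h
    linarith

lemma qf_low (hK : IsCompact K) {y : EuclideanSpace ℝ (Fin n)} {ε : ℝ} (hε : 0 < ε)
    (hb : Metric.closedBall y ε ⊆ K) (w : EuclideanSpace ℝ (Fin n)) :
    ε * ‖w‖ ≤ qf K y w := by
  rcases eq_or_ne w 0 with rfl | hw
  · have h0 : y ∈ K := hb (Metric.mem_closedBall_self hε.le)
    have := le_supK hK h0 (0 : EuclideanSpace ℝ (Fin n))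
    simp only [inner_zero_left] at this
    simp only [qf, norm_zero, mul_zero, inner_zero_left, sub_zero]
    linarith
  · have hwn : (0:ℝ) < ‖w‖ := norm_pos_iff.2 hw
    set z : EuclideanSpace ℝ (Fin n) := y + (ε / ‖w‖) • w with hz
    have hzK : z ∈ K := by
      apply hb
      rw [Metric.mem_closedBall, dist_eq_norm, hz, add_sub_cancel_left, norm_smul]
      rw [Real.norm_eq_abs, abs_of_nonneg (by positivity)]
      field_simp
      exact le_rfl
    have h1 : ⟪w, z⟫ = ⟪w, y⟫ + ε * ‖w‖ := by
      rw [hz, inner_add_right, real_inner_smul_right, real_inner_self_eq_norm_mul_norm]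
      field_simp
    have h2 := le_supK hK hzK w
    rw [h1] at h2
    simp only [qf]
    linarith

end Support

section Core

variable {n : ℕ} {K : Set (EuclideanSpace ℝ (Fin n))}

lemma integrable_of_cont {f : EuclideanSpace ℝ (Fin n) → ℝ} (hf : Continuous f)
    (h0 : ∀ w, 0 ≤ f w) (hfin : ∫⁻ w, ENNReal.ofReal (f w) < ⊤) :
    Integrable f volume := by
  refine ⟨hf.aestronglyMeasurable, ?_⟩
  rw [HasFiniteIntegral]
  have : ∀ w, ‖f w‖ₑ = ENNReal.ofReal (f w) := fun w => Real.enorm_eq_ofReal (h0 w)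
  simpa only [this] using hfin

lemma lint_exp_mul (hK : IsCompact K) (hne : K.Nonempty)
    {y : EuclideanSpace ℝ (Fin n)} {ε : ℝ} (hε : 0 < ε) (hb : Metric.closedBall y ε ⊆ K)
    {ℓ : EuclideanSpace ℝ (Fin n) → ℝ} {k : ℕ} (hℓ : Continuous ℓ) (hℓ0 : ∀ w, 0 ≤ ℓ w)
    (hℓh : ∀ t : ℝ, 0 < t → ∀ w, ℓ (t • w) = t ^ k * ℓ w) :
    ∫⁻ w, ENNReal.ofReal (ℓ w * Real.exp (-qf K y w)) =
      (Nat.factorial (n + k) : ℝ≥0∞) * ∫⁻ w in polarAt K y, ENNReal.ofReal (ℓ w) := by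
  have hlow := qf_low hK hε hb
  have hq0 : ∀ w, 0 ≤ qf K y w := fun w => le_trans (mul_nonneg hε.le (norm_nonneg w)) (hlow w)
  rw [homog_lintegral (qf_continuous hK hne y) hℓ hℓ0 (fun t ht w => qf_smul hK hne y ht w)
    hℓh hq0]
  rw [polarAt_eq_qf hK hne y,
    sublevel_le_eq_lt (qf_continuous hK hne y) hℓ hℓ0 (fun t ht w => qf_smul hK hne y ht w)
    hℓh hε hlow]

lemma lint_polar_finite (hK : IsCompact K) (hne : K.Nonempty)
    {y : EuclideanSpace ℝ (Fin n)} {ε : ℝ} (hε : 0 < ε) (hb : Metric.closedBall y ε ⊆ K)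
    {ℓ : EuclideanSpace ℝ (Fin n) → ℝ} (hℓ : Continuous ℓ) :
    ∫⁻ w in polarAt K y, ENNReal.ofReal (ℓ w) < ⊤ := by
  rw [polarAt_eq_qf hK hne y]
  exact sublevel_int_finite hℓ hε (qf_low hK hε hb)

lemma integrable_exp_mul (hK : IsCompact K) (hne : K.Nonempty)
    {y : EuclideanSpace ℝ (Fin n)} {ε : ℝ} (hε : 0 < ε) (hb : Metric.closedBall y ε ⊆ K)
    {ℓ : EuclideanSpace ℝ (Fin n) → ℝ} {k : ℕ} (hℓ : Continuous ℓ) (hℓ0 : ∀ w, 0 ≤ ℓ w)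
    (hℓh : ∀ t : ℝ, 0 < t → ∀ w, ℓ (t • w) = t ^ k * ℓ w) :
    Integrable (fun w => ℓ w * Real.exp (-qf K y w)) volume := by
  refine integrable_of_cont (hℓ.mul ((qf_continuous hK hne y).neg.rexp))
    (fun w => mul_nonneg (hℓ0 w) (Real.exp_nonneg _)) ?_
  rw [lint_exp_mul hK hne hε hb hℓ hℓ0 hℓh]
  exact ENNReal.mul_lt_top (ENNReal.natCast_ne_top _).lt_top (lint_polar_finite hK hne hε hb hℓ)

lemma polar_isCompact (hK : IsCompact K) (hne : K.Nonempty)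
    {y : EuclideanSpace ℝ (Fin n)} {ε : ℝ} (hε : 0 < ε) (hb : Metric.closedBall y ε ⊆ K) :
    IsCompact (polarAt K y) := by
  rw [polarAt_eq_qf hK hne y]
  refine Metric.isCompact_of_isClosed_isBounded
    (isClosed_le (qf_continuous hK hne y) continuous_const) ?_
  exact Metric.isBounded_closedBall.subset (sublevel_subset_ball hε (qf_low hK hε hb))

lemma real_exp_mul_eq (hK : IsCompact K) (hne : K.Nonempty)
    {y : EuclideanSpace ℝ (Fin n)} {ε : ℝ} (hε : 0 < ε) (hb : Metric.closedBall y ε ⊆ K)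
    {ℓ : EuclideanSpace ℝ (Fin n) → ℝ} {k : ℕ} (hℓ : Continuous ℓ) (hℓ0 : ∀ w, 0 ≤ ℓ w)
    (hℓh : ∀ t : ℝ, 0 < t → ∀ w, ℓ (t • w) = t ^ k * ℓ w) :
    ∫ w, ℓ w * Real.exp (-qf K y w) =
      (Nat.factorial (n + k) : ℝ) * ∫ w in polarAt K y, ℓ w := by
  rw [integral_eq_lintegral_of_nonneg_ae (f := fun w => ℓ w * Real.exp (-qf K y w))
    (Filter.Eventually.of_forall fun w => mul_nonneg (hℓ0 w) (Real.exp_nonneg _))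
    (hℓ.mul ((qf_continuous hK hne y).neg.rexp)).aestronglyMeasurable]
  rw [integral_eq_lintegral_of_nonneg_ae (Filter.Eventually.of_forall fun w => hℓ0 w)
    hℓ.aestronglyMeasurable]
  rw [lint_exp_mul hK hne hε hb hℓ hℓ0 hℓh, ENNReal.toReal_mul]
  simp

end Core

section Core2

variable {n : ℕ} {K : Set (EuclideanSpace ℝ (Fin n))}

lemma vol_polar_eq (hK : IsCompact K) (hne : K.Nonempty)
    {y : EuclideanSpace ℝ (Fin n)} {ε : ℝ} (hε : 0 < ε) (hb : Metric.closedBall y ε ⊆ K) :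
    ∫⁻ w, ENNReal.ofReal (Real.exp (-qf K y w)) =
      (Nat.factorial n : ℝ≥0∞) * volume (polarAt K y) := by
  have h := lint_exp_mul (k := 0) (ℓ := fun _ => (1:ℝ)) hK hne hε hb continuous_const
    (fun _ => zero_le_one) (fun t ht w => by simp)
  simp only [one_mul, ENNReal.ofReal_one, add_zero] at h
  rw [h, setLIntegral_one]

lemma exp_inner_eq (hK : IsCompact K) (hne : K.Nonempty)
    {y : EuclideanSpace ℝ (Fin n)} {ε : ℝ} (hε : 0 < ε) (hb : Metric.closedBall y ε ⊆ K)
    (u : EuclideanSpace ℝ (Fin n)) :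
    ∫ w, Real.exp (-qf K y w) * ⟪w, u⟫ =
      (Nat.factorial (n + 1) : ℝ) * ∫ w in polarAt K y, ⟪w, u⟫ := by
  set ℓp : EuclideanSpace ℝ (Fin n) → ℝ := fun w => max ⟪w, u⟫ 0 with hℓp
  set ℓm : EuclideanSpace ℝ (Fin n) → ℝ := fun w => max (-⟪w, u⟫) 0 with hℓm
  have hcontp : Continuous ℓp := (continuous_id.inner continuous_const).max continuous_const
  have hcontm : Continuous ℓm := (continuous_id.inner continuous_const).neg.max continuous_const
  have hp0 : ∀ w, 0 ≤ ℓp w := fun w => le_max_right _ _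
  have hm0 : ∀ w, 0 ≤ ℓm w := fun w => le_max_right _ _
  have hph : ∀ t : ℝ, 0 < t → ∀ w, ℓp (t • w) = t ^ 1 * ℓp w := by
    intro t ht w
    simp only [hℓp, real_inner_smul_left, pow_one]
    rw [mul_max_of_nonneg _ _ ht.le, mul_zero]
  have hmh : ∀ t : ℝ, 0 < t → ∀ w, ℓm (t • w) = t ^ 1 * ℓm w := by
    intro t ht w
    simp only [hℓm, real_inner_smul_left, pow_one, ← neg_mul, mul_comm t _]
    rw [max_mul_of_nonneg _ _ ht.le, zero_mul]
  have decomp : ∀ w : EuclideanSpace ℝ (Fin n), ⟪w, u⟫ = ℓp w - ℓm w :=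
    fun w => (max_zero_sub_max_neg_zero_eq_self _).symm
  have h1 : ∀ w, Real.exp (-qf K y w) * ⟪w, u⟫
      = ℓp w * Real.exp (-qf K y w) - ℓm w * Real.exp (-qf K y w) := by
    intro w
    rw [mul_comm, decomp w, sub_mul]
  simp_rw [h1]
  rw [integral_sub (integrable_exp_mul hK hne hε hb hcontp hp0 hph)
    (integrable_exp_mul hK hne hε hb hcontm hm0 hmh)]
  rw [real_exp_mul_eq hK hne hε hb hcontp hp0 hph, real_exp_mul_eq hK hne hε hb hcontm hm0 hmh]
  have hPc := polar_isCompact hK hne hε hb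
  have hip : IntegrableOn ℓp (polarAt K y) volume := hcontp.continuousOn.integrableOn_compact hPc
  have him : IntegrableOn ℓm (polarAt K y) volume := hcontm.continuousOn.integrableOn_compact hPc
  rw [← mul_sub, ← integral_sub hip him]
  congr 1
  refine integral_congr_ae (Filter.Eventually.of_forall fun w => ?_)
  exact (decomp w).symm

end Core2

section Core3

variable {n : ℕ} {K : Set (EuclideanSpace ℝ (Fin n))}

lemma integrable_exp_inner (hK : IsCompact K) (hne : K.Nonempty)
    {y : EuclideanSpace ℝ (Fin n)} {ε : ℝ} (hε : 0 < ε) (hb : Metric.closedBall y ε ⊆ K)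
    (u : EuclideanSpace ℝ (Fin n)) :
    Integrable (fun w => Real.exp (-qf K y w) * ⟪w, u⟫) volume := by
  set ℓp : EuclideanSpace ℝ (Fin n) → ℝ := fun w => max ⟪w, u⟫ 0 with hℓp
  set ℓm : EuclideanSpace ℝ (Fin n) → ℝ := fun w => max (-⟪w, u⟫) 0 with hℓm
  have hcontp : Continuous ℓp := (continuous_id.inner continuous_const).max continuous_const
  have hcontm : Continuous ℓm := (continuous_id.inner continuous_const).neg.max continuous_const
  have hph : ∀ t : ℝ, 0 < t → ∀ w, ℓp (t • w) = t ^ 1 * ℓp w := by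
    intro t ht w
    simp only [hℓp, real_inner_smul_left, pow_one]
    rw [mul_max_of_nonneg _ _ ht.le, mul_zero]
  have hmh : ∀ t : ℝ, 0 < t → ∀ w, ℓm (t • w) = t ^ 1 * ℓm w := by
    intro t ht w
    simp only [hℓm, real_inner_smul_left, pow_one, ← neg_mul, mul_comm t _]
    rw [max_mul_of_nonneg _ _ ht.le, zero_mul]
  have h := (integrable_exp_mul hK hne hε hb hcontp (fun w => le_max_right _ _) hph).sub
    (integrable_exp_mul hK hne hε hb hcontm (fun w => le_max_right _ _) hmh)
  refine h.congr (Filter.Eventually.of_forall fun w => ?_)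
  simp only [Pi.sub_apply]
  rw [← sub_mul, max_zero_sub_max_neg_zero_eq_self, mul_comm]

lemma integrable_exp_qf (hK : IsCompact K) (hne : K.Nonempty)
    {y : EuclideanSpace ℝ (Fin n)} {ε : ℝ} (hε : 0 < ε) (hb : Metric.closedBall y ε ⊆ K) :
    Integrable (fun w => Real.exp (-qf K y w)) volume := by
  have := integrable_exp_mul (ℓ := fun _ => (1:ℝ)) (k := 0) hK hne hε hb continuous_const
    (fun _ => zero_le_one) (fun t ht w => by simp)
  simpa only [one_mul] using this

lemma ofReal_f_eq (hK : IsCompact K) (hne : K.Nonempty)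
    {y : EuclideanSpace ℝ (Fin n)} {ε : ℝ} (hε : 0 < ε) (hb : Metric.closedBall y ε ⊆ K) :
    ENNReal.ofReal (∫ w, Real.exp (-qf K y w)) =
      (Nat.factorial n : ℝ≥0∞) * volume (polarAt K y) := by
  rw [ofReal_integral_eq_lintegral_ofReal (integrable_exp_qf hK hne hε hb)
    (Filter.Eventually.of_forall fun w => Real.exp_nonneg _)]
  exact vol_polar_eq hK hne hε hb

lemma setIntegral_inner_polar (hK : IsCompact K) (hne : K.Nonempty)
    {y : EuclideanSpace ℝ (Fin n)} {ε : ℝ} (hε : 0 < ε) (hb : Metric.closedBall y ε ⊆ K)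
    (u : EuclideanSpace ℝ (Fin n)) :
    ∫ w in polarAt K y, ⟪w, u⟫ = ⟪u, ∫ w in polarAt K y, (w : EuclideanSpace ℝ (Fin n))⟫ := by
  have hPc := polar_isCompact hK hne hε hb
  have hid : IntegrableOn (fun w : EuclideanSpace ℝ (Fin n) => w) (polarAt K y) volume :=
    continuous_id.continuousOn.integrableOn_compact hPc
  rw [← integral_inner hid u]
  refine integral_congr_ae (Filter.Eventually.of_forall fun w => ?_)
  exact real_inner_comm _ _

end Core3

set_option maxHeartbeats 2000000 in
/-- For a convex body `K` in `ℝⁿ`, an interior point `x` of `K` is the Santaló point of `K`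
if and only if `0` is the centroid of `(K - x)^∘`. -/
theorem isSantaloPoint_iff_centroid_polar_eq_zero
    {n : ℕ} (K : Set (EuclideanSpace ℝ (Fin n)))
    (hK : IsCompact K) (hconv : Convex ℝ K) (hint : (interior K).Nonempty)
    (x : EuclideanSpace ℝ (Fin n)) (hx : x ∈ interior K) :
    IsSantaloPoint K x ↔ centroid (polarAt K x) = 0 := by
  classical
  have hne : K.Nonempty := ⟨x, interior_subset hx⟩
  -- a closed ball around x inside K
  obtain ⟨ε₀', hε₀', hb₀'⟩ := Metric.mem_nhds_iff.1 (mem_interior_iff_mem_nhds.1 hx)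
  set ε₀ : ℝ := ε₀' / 2 with hε₀def
  have hε₀ : 0 < ε₀ := by positivity
  have hb₀ : Metric.closedBall x ε₀ ⊆ K :=
    (Metric.closedBall_subset_ball (by simp [hε₀def]; linarith)).trans hb₀'
  -- closed balls for arbitrary interior points
  have hballs : ∀ y ∈ interior K, ∃ ε : ℝ, 0 < ε ∧ Metric.closedBall y ε ⊆ K := by
    intro y hy
    obtain ⟨ε', hε', hb'⟩ := Metric.mem_nhds_iff.1 (mem_interior_iff_mem_nhds.1 hy)
    exact ⟨ε' / 2, by positivity,
      (Metric.closedBall_subset_ball (by linarith)).trans hb'⟩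
  set P := polarAt K x with hP
  set c : EuclideanSpace ℝ (Fin n) := ∫ w in P, w with hc
  -- volume of P is positive and finite
  have hPfin : volume P < ⊤ := by
    have h := lint_polar_finite (ℓ := fun _ => (1:ℝ)) hK hne hε₀ hb₀ continuous_const
    simpa using h
  have hPpos : 0 < volume P := by
    obtain ⟨R₀, hR₀⟩ := hK.isBounded.subset_closedBall 0
    have hR₀0 : 0 ≤ R₀ := by
      obtain ⟨z, hz⟩ := hne
      have := hR₀ hz
      rw [Metric.mem_closedBall, dist_zero_right] at this
      exact (norm_nonneg z).trans this
    set D : ℝ := R₀ + ‖x‖ + 1 with hD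
    have hDpos : 0 < D := by positivity
    have hsub : Metric.ball (0 : EuclideanSpace ℝ (Fin n)) D⁻¹ ⊆ P := by
      intro w hw
      rw [Metric.mem_ball, dist_zero_right] at hw
      intro z hz
      have hz' : ‖z - x‖ ≤ D := by
        have h1 : ‖z‖ ≤ R₀ := by
          have := hR₀ hz
          rwa [Metric.mem_closedBall, dist_zero_right] at this
        calc ‖z - x‖ ≤ ‖z‖ + ‖x‖ := norm_sub_le _ _
          _ ≤ D := by rw [hD]; linarith
      calc ⟪w, z - x⟫ ≤ ‖w‖ * ‖z - x‖ := real_inner_le_norm _ _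
        _ ≤ D⁻¹ * D := by
            refine mul_le_mul hw.le hz' (norm_nonneg _) (by positivity)
        _ = 1 := by field_simp
    calc (0:ℝ≥0∞) < volume (Metric.ball (0 : EuclideanSpace ℝ (Fin n)) D⁻¹) :=
          Metric.measure_ball_pos _ _ (by positivity)
      _ ≤ volume P := measure_mono hsub
  have htR : 0 < (volume P).toReal := ENNReal.toReal_pos hPpos.ne' hPfin.ne
  have hcentroid : centroid P = 0 ↔ c = 0 := by
    unfold centroid
    rw [← hc, smul_eq_zero]
    constructor
    · rintro (h | h)
      · exact absurd h (inv_ne_zero htR.ne')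
      · exact h
    · exact Or.inr
  -- factorial facts
  have hfac0 : (Nat.factorial n : ℝ≥0∞) ≠ 0 := by
    simp [Nat.factorial_ne_zero]
  have hfactop : (Nat.factorial n : ℝ≥0∞) ≠ ⊤ := ENNReal.natCast_ne_top _
  rw [hcentroid]
  constructor
  · -- Santaló point ⇒ centroid of polar is 0
    rintro ⟨-, hmin⟩
    have hKpos : volume K ≠ 0 := (MeasureTheory.Measure.measure_pos_of_nonempty_interior _ hint).ne'
    have hKfin : volume K ≠ ⊤ := hK.measure_lt_top.ne
    have hminP : ∀ y ∈ interior K, volume P ≤ volume (polarAt K y) := fun y hy =>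
      (ENNReal.mul_le_mul_iff_right hKpos hKfin).1 (hmin y hy)
    by_contra hcne
    set d : EuclideanSpace ℝ (Fin n) := -c with hd
    have hlow₀ := qf_low hK hε₀ hb₀
    set ε₁ : ℝ := ε₀ / (2 * (‖d‖ + 1)) with hε₁def
    have hε₁ : 0 < ε₁ := by positivity
    set bound : EuclideanSpace ℝ (Fin n) → ℝ :=
      fun w => (‖d‖ * ‖w‖) * Real.exp (-(ε₀ / 2 * ‖w‖)) with hbounddef
    have hbint : Integrable bound volume := by
      refine integrable_of_cont
        ((continuous_const.mul continuous_norm).mul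
          ((continuous_const.mul continuous_norm).neg.rexp))
        (fun w => by positivity) ?_
      have h := homog_lintegral (q := fun w : EuclideanSpace ℝ (Fin n) => ε₀ / 2 * ‖w‖)
        (ℓ := fun w : EuclideanSpace ℝ (Fin n) => ‖d‖ * ‖w‖) (k := 1)
        (continuous_const.mul continuous_norm) (continuous_const.mul continuous_norm)
        (fun w => by positivity)
        (fun t ht w => by
          show ε₀ / 2 * ‖t • w‖ = t * (ε₀ / 2 * ‖w‖)
          rw [norm_smul, Real.norm_eq_abs, abs_of_nonneg ht.le]; ring)
        (fun t ht w => by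
          show ‖d‖ * ‖t • w‖ = t ^ 1 * (‖d‖ * ‖w‖)
          rw [norm_smul, Real.norm_eq_abs, abs_of_nonneg ht.le]; ring)
        (fun w => by positivity)
      rw [show bound = fun w : EuclideanSpace ℝ (Fin n) =>
        (‖d‖ * ‖w‖) * Real.exp (-(ε₀ / 2 * ‖w‖)) from rfl, h]
      refine ENNReal.mul_lt_top (ENNReal.natCast_ne_top _).lt_top ?_
      refine lt_of_le_of_lt (lintegral_mono_set (fun w hw => ?_))
        (sublevel_int_finite (q := fun w : EuclideanSpace ℝ (Fin n) => ε₀ / 2 * ‖w‖)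
          (continuous_const.mul continuous_norm) (by positivity) (fun w => le_refl _))
      simp only [Set.mem_setOf_eq] at hw ⊢
      exact hw.le
    set F : ℝ → EuclideanSpace ℝ (Fin n) → ℝ :=
      fun t w => Real.exp (-qf K x w + t * ⟪w, d⟫) with hFdef
    set F' : ℝ → EuclideanSpace ℝ (Fin n) → ℝ :=
      fun t w => ⟪w, d⟫ * Real.exp (-qf K x w + t * ⟪w, d⟫) with hF'def
    have hFcont : ∀ t, Continuous (F t) := fun t =>
      ((qf_continuous hK hne x).neg.add
        (continuous_const.mul (continuous_id.inner continuous_const))).rexp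
    have hF'cont : ∀ t, Continuous (F' t) := fun t =>
      (continuous_id.inner continuous_const).mul (hFcont t)
    have h_bound : ∀ w : EuclideanSpace ℝ (Fin n), ∀ t ∈ Metric.ball (0:ℝ) ε₁,
        ‖F' t w‖ ≤ bound w := by
      intro w t ht
      rw [Metric.mem_ball, Real.dist_eq, sub_zero] at ht
      have h1 : |⟪w, d⟫| ≤ ‖w‖ * ‖d‖ := abs_real_inner_le_norm _ _
      have h2 : -qf K x w + t * ⟪w, d⟫ ≤ -(ε₀ / 2 * ‖w‖) := by
        have ha : t * ⟪w, d⟫ ≤ |t| * (‖w‖ * ‖d‖) := by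
          calc t * ⟪w, d⟫ ≤ |t * ⟪w, d⟫| := le_abs_self _
            _ = |t| * |⟪w, d⟫| := abs_mul _ _
            _ ≤ |t| * (‖w‖ * ‖d‖) := mul_le_mul_of_nonneg_left h1 (abs_nonneg _)
        have hb : |t| * (‖w‖ * ‖d‖) ≤ ε₁ * ‖d‖ * ‖w‖ := by
          have := mul_le_mul_of_nonneg_right ht.le
            (mul_nonneg (norm_nonneg w) (norm_nonneg d))
          nlinarith [norm_nonneg w, norm_nonneg d, abs_nonneg t]
        have hcc : ε₁ * ‖d‖ ≤ ε₀ / 2 := by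
          rw [hε₁def]
          rw [div_mul_eq_mul_div, div_le_div_iff₀ (by positivity) (by norm_num)]
          nlinarith [norm_nonneg d, hε₀.le]
        have hq := hlow₀ w
        nlinarith [norm_nonneg w]
      calc ‖F' t w‖ = |⟪w, d⟫| * Real.exp (-qf K x w + t * ⟪w, d⟫) := by
            rw [hF'def, Real.norm_eq_abs, abs_mul, Real.abs_exp]
        _ ≤ (‖w‖ * ‖d‖) * Real.exp (-(ε₀ / 2 * ‖w‖)) := by
            exact mul_le_mul h1 (Real.exp_le_exp.2 h2) (Real.exp_nonneg _) (by positivity)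
        _ = bound w := by rw [hbounddef]; ring_nf
    have h_diff : ∀ w : EuclideanSpace ℝ (Fin n), ∀ t ∈ Metric.ball (0:ℝ) ε₁,
        HasDerivAt (fun s => F s w) (F' t w) t := by
      intro w t _
      have h := (((hasDerivAt_id t).mul_const ⟪w, d⟫).const_add (-qf K x w)).exp
      simpa [hFdef, hF'def, mul_comm] using h
    have hF0int : Integrable (F 0) volume := by
      refine (integrable_exp_qf hK hne hε₀ hb₀).congr
        (Filter.Eventually.of_forall fun w => ?_)
      simp [hFdef]
    obtain ⟨hF'0int, hderiv⟩ := hasDerivAt_integral_of_dominated_loc_of_deriv_le (Metric.ball_mem_nhds 0 hε₁)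
      (Filter.Eventually.of_forall fun t => (hFcont t).aestronglyMeasurable) hF0int
      ((hF'cont 0).aestronglyMeasurable)
      (Filter.Eventually.of_forall h_bound) hbint
      (Filter.Eventually.of_forall h_diff)
    have hD : (∫ w, F' 0 w) = -((Nat.factorial (n+1) : ℝ) * ‖c‖^2) := by
      have h1 : (∫ w, F' 0 w) = ∫ w, Real.exp (-qf K x w) * ⟪w, d⟫ := by
        refine integral_congr_ae (Filter.Eventually.of_forall fun w => ?_)
        simp [hF'def, mul_comm]
      rw [h1, exp_inner_eq hK hne hε₀ hb₀ d, setIntegral_inner_polar hK hne hε₀ hb₀ d,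
        ← hP, ← hc, hd, inner_neg_left, real_inner_self_eq_norm_sq]
      ring
    have hL0 : (∫ w, F' 0 w) < 0 := by
      rw [hD]
      have hcpos : 0 < ‖c‖ := norm_pos_iff.2 hcne
      have hfacpos : (0:ℝ) < (Nat.factorial (n+1) : ℝ) := by
        exact_mod_cast Nat.factorial_pos (n+1)
      have h2 : 0 < (Nat.factorial (n+1) : ℝ) * ‖c‖^2 := mul_pos hfacpos (pow_pos hcpos 2)
      linarith
    have hslope := hasDerivAt_iff_tendsto_slope.1 hderiv
    have ev1 : ∀ᶠ t in nhdsWithin (0:ℝ) {(0:ℝ)}ᶜ,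
        slope (fun s => ∫ w, F s w) 0 t < 0 := hslope.eventually (gt_mem_nhds hL0)
    have hmono : nhdsWithin (0:ℝ) (Set.Ioi 0) ≤ nhdsWithin (0:ℝ) {(0:ℝ)}ᶜ :=
      nhdsWithin_mono 0 (fun t ht => ne_of_gt ht)
    have ev1' := ev1.filter_mono hmono
    have htendx : Filter.Tendsto (fun t : ℝ => x + t • d) (nhds 0) (nhds x) := by
      have hcont : Continuous fun t : ℝ => x + t • d :=
        continuous_const.add (continuous_id.smul continuous_const)
      have h := hcont.tendsto 0
      simpa using h
    have ev2 : ∀ᶠ t in nhds (0:ℝ), x + t • d ∈ interior K :=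
      htendx.eventually (isOpen_interior.eventually_mem hx)
    have ev2' : ∀ᶠ t in nhdsWithin (0:ℝ) (Set.Ioi 0), x + t • d ∈ interior K :=
      ev2.filter_mono nhdsWithin_le_nhds
    have ev3 : ∀ᶠ t in nhdsWithin (0:ℝ) (Set.Ioi 0), t ∈ Set.Ioi (0:ℝ) :=
      eventually_mem_nhdsWithin
    obtain ⟨t, h1t, h2t, h3t⟩ := (ev1'.and (ev2'.and ev3)).exists
    have htpos : (0:ℝ) < t := h3t
    have hφt : (∫ w, F t w) < ∫ w, F 0 w := by
      have hs : ((∫ w, F t w) - ∫ w, F 0 w) / t < 0 := by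
        have := h1t
        rw [slope_def_field] at this
        simpa using this
      rcases div_neg_iff.1 hs with ⟨-, hneg⟩ | ⟨h, -⟩
      · linarith
      · linarith
    set y := x + t • d with hy
    obtain ⟨εy, hεy, hby⟩ := hballs y h2t
    have hFt : (∫ w, F t w) = ∫ w, Real.exp (-qf K y w) := by
      refine integral_congr_ae (Filter.Eventually.of_forall fun w => ?_)
      have heq : -qf K y w = -qf K x w + t * ⟪w, d⟫ := by
        simp only [qf, hy, inner_add_right, real_inner_smul_right]
        ring
      show Real.exp (-qf K x w + t * ⟪w, d⟫) = Real.exp (-qf K y w)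
      rw [heq]
    have hF0 : (∫ w, F 0 w) = ∫ w, Real.exp (-qf K x w) := by
      refine integral_congr_ae (Filter.Eventually.of_forall fun w => ?_)
      simp [hFdef]
    have hfx := ofReal_f_eq hK hne hε₀ hb₀
    have hfy := ofReal_f_eq hK hne hεy hby
    rw [← hP] at hfx
    have hle : ENNReal.ofReal (∫ w, Real.exp (-qf K x w))
        ≤ ENNReal.ofReal (∫ w, Real.exp (-qf K y w)) := by
      rw [hfx, hfy]
      exact mul_le_mul_right (hminP y h2t) _
    have hxy : (∫ w, Real.exp (-qf K x w)) ≤ ∫ w, Real.exp (-qf K y w) :=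
      (ENNReal.ofReal_le_ofReal_iff
        (integral_nonneg fun w => Real.exp_nonneg _)).1 hle
    rw [← hFt, ← hF0] at hxy
    linarith
  · -- centroid of polar is 0 ⇒ Santaló point
    intro hc0
    refine ⟨hx, fun y hy => ?_⟩
    refine mul_le_mul_right ?_ _
    obtain ⟨εy, hεy, hby⟩ := hballs y hy
    -- reduce to comparing the exponential integrals
    have hfx := ofReal_f_eq hK hne hε₀ hb₀
    have hfy := ofReal_f_eq hK hne hεy hby
    rw [← hP] at hfx
    have hle : (∫ w, Real.exp (-qf K x w)) ≤ ∫ w, Real.exp (-qf K y w) := by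
      have hint1 := integrable_exp_qf hK hne hε₀ hb₀
      have hint2 := integrable_exp_inner hK hne hε₀ hb₀ (y - x)
      have hzero : ∫ w, Real.exp (-qf K x w) * ⟪w, y - x⟫ = 0 := by
        rw [exp_inner_eq hK hne hε₀ hb₀ (y - x),
          setIntegral_inner_polar hK hne hε₀ hb₀ (y - x), ← hP, ← hc, hc0, inner_zero_right,
          mul_zero]
      have hpt : ∀ w, Real.exp (-qf K x w) + Real.exp (-qf K x w) * ⟪w, y - x⟫
          ≤ Real.exp (-qf K y w) := by
        intro w
        have hq : -qf K y w = -qf K x w + ⟪w, y - x⟫ := by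
          unfold qf
          rw [inner_sub_right]
          ring
        rw [hq, Real.exp_add, ← mul_one_add]
        refine mul_le_mul_of_nonneg_left ?_ (Real.exp_nonneg _)
        have := Real.add_one_le_exp ⟪w, y - x⟫
        linarith
      have h3 := integral_mono (hint1.add hint2) (integrable_exp_qf hK hne hεy hby) hpt
      simp only [Pi.add_apply] at h3
      rw [integral_add hint1 hint2, hzero, add_zero] at h3
      exact h3
    have h4 : (Nat.factorial n : ℝ≥0∞) * volume P
        ≤ (Nat.factorial n : ℝ≥0∞) * volume (polarAt K y) := by
      rw [← hfx, ← hfy]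
      exact ENNReal.ofReal_le_ofReal hle
    exact (ENNReal.mul_le_mul_iff_right hfac0 hfactop).1 h4
end

section
/- For all n ∈ ℕ and all t ≥ 0, vol_n(B₂ⁿ + t B_∞ⁿ) = Σ_{k=0}^{n} C(n,k) · 2^k · vol_{n−k}(B₂^{n−k}) · t^k, where B₂ⁿ + t B_∞ⁿ is the Minkowski sum, vol_{n−k}(B₂^{n−k}) = π^{(n−k)/2}/Γ(1 + (n−k)/2) is the volume of the (n−k)-dimensional Euclidean unit ball, and by convention vol₀(B₂⁰) = 1. -/
open MeasureTheory
open scoped Pointwise ENNReal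


noncomputable def mfun (t s : ℝ) : ℝ := max (|s| - t) 0
noncomputable def W (n : ℕ) (t c : ℝ) : ℝ≥0∞ :=
  volume {x : Fin n → ℝ | ∑ i, mfun t (x i) ^ 2 ≤ c}


lemma W_zero_dim (t c : ℝ) : W 0 t c = if 0 ≤ c then 1 else 0 := by
  unfold W
  split_ifs with h
  · have : {x : Fin 0 → ℝ | ∑ i, mfun t (x i) ^ 2 ≤ c} = Set.univ := by
      ext x; simpa using h
    rw [this, volume_pi, Measure.pi_univ]; simp
  · have : {x : Fin 0 → ℝ | ∑ i, mfun t (x i) ^ 2 ≤ c} = ∅ := by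
      ext x; simpa using h
    rw [this]; simp

lemma mfun_continuous (t : ℝ) : Continuous (mfun t) := by
  unfold mfun; fun_prop

lemma Wset_measurable (n : ℕ) (t c : ℝ) :
    MeasurableSet {x : Fin n → ℝ | ∑ i, mfun t (x i) ^ 2 ≤ c} := by
  apply measurableSet_le _ measurable_const
  exact Finset.measurable_sum _ fun i _ =>
    (((mfun_continuous t).measurable.comp (measurable_pi_apply i)).pow_const 2)

lemma W_mono (n : ℕ) (t : ℝ) : Monotone (W n t) := fun _ _ hab =>
  measure_mono fun _ hx => le_trans hx hab

lemma W_measurable (n : ℕ) (t : ℝ) : Measurable (W n t) := (W_mono n t).measurable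

-- Fubini step
lemma W_fubini (n : ℕ) (t c : ℝ) :
    W (n+1) t c = ∫⁻ s : ℝ, W n t (c - mfun t s ^ 2) := by
  have hmp := volume_preserving_piFinSuccAbove (fun _ : Fin (n+1) => ℝ) 0
  set T : Set (ℝ × (Fin n → ℝ)) :=
    {p | mfun t p.1 ^ 2 + ∑ i, mfun t (p.2 i) ^ 2 ≤ c} with hT
  have hTm : MeasurableSet T := by
    apply measurableSet_le _ measurable_const
    apply Measurable.add
    · exact ((mfun_continuous t).measurable.comp measurable_fst).pow_const 2
    · exact Finset.measurable_sum _ fun i _ =>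
        (((mfun_continuous t).measurable.comp
          ((measurable_pi_apply i).comp measurable_snd)).pow_const 2)
  have hpre : (MeasurableEquiv.piFinSuccAbove (fun _ : Fin (n+1) => ℝ) 0) ⁻¹' T
      = {x : Fin (n+1) → ℝ | ∑ i, mfun t (x i) ^ 2 ≤ c} := by
    ext x
    simp [MeasurableEquiv.piFinSuccAbove, T, Fin.sum_univ_succ, Fin.tail]
  have := hmp.measure_preimage hTm.nullMeasurableSet
  rw [hpre] at this
  rw [W, this]
  rw [show (volume : Measure (ℝ × (Fin n → ℝ))) = Measure.prod volume volume from rfl]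
  rw [Measure.prod_apply hTm]
  congr 1
  ext s
  have : Prod.mk s ⁻¹' T = {x : Fin n → ℝ | ∑ i, mfun t (x i) ^ 2 ≤ c - mfun t s ^ 2} := by
    ext x; simp [T]; constructor <;> intro h <;> linarith
  rw [this]; rfl

lemma lintegral_even_split {G : ℝ → ℝ≥0∞}
    (heven : ∀ s, G (-s) = G s) :
    ∫⁻ s : ℝ, G s = 2 * ∫⁻ s in Set.Ioi (0:ℝ), G s := by
  rw [← lintegral_add_compl G measurableSet_Ioi, Set.compl_Ioi]
  have h1 : ∫⁻ s in Set.Iic (0:ℝ), G s = ∫⁻ s in Set.Iio (0:ℝ), G s :=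
    (setLIntegral_congr (MeasureTheory.Iio_ae_eq_Iic (a := (0:ℝ)))).symm
  have h2 : ∫⁻ s in Set.Iio (0:ℝ), G s = ∫⁻ s in Set.Ioi (0:ℝ), G s := by
    have := (Measure.measurePreserving_neg (volume : Measure ℝ)).setLIntegral_comp_preimage_emb
      (Homeomorph.neg ℝ).measurableEmbedding G (Set.Iio (0:ℝ))
    have hpre : (Neg.neg : ℝ → ℝ) ⁻¹' Set.Iio 0 = Set.Ioi 0 := by
      ext s; simp
    rw [hpre] at this
    rw [← this]
    exact setLIntegral_congr_fun measurableSet_Ioi (fun s _ => heven s)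
  rw [h1, h2, two_mul]

lemma W_succ (n : ℕ) (t c : ℝ) (ht : 0 ≤ t) :
    W (n+1) t c = ENNReal.ofReal (2*t) * W n t c + ∫⁻ s : ℝ, W n t (c - s ^ 2) := by
  have hIcc : ∫⁻ s in Set.Icc (-t) t, W n t (c - mfun t s ^ 2)
      = ENNReal.ofReal (2*t) * W n t c := by
    have h0 : ∀ s ∈ Set.Icc (-t) t, W n t (c - mfun t s ^ 2) = W n t c := by
      intro s hs
      have hm : mfun t s = 0 := by
        have : |s| ≤ t := abs_le.mpr ⟨hs.1, hs.2⟩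
        simp [mfun, max_eq_right, sub_nonpos.mpr this]
      simp [hm]
    rw [setLIntegral_congr_fun measurableSet_Icc h0, setLIntegral_const,
      Real.volume_Icc, mul_comm]
    congr 2
    ring
  have hIoi : ∫⁻ s in Set.Ioi t, W n t (c - mfun t s ^ 2)
      = ∫⁻ u in Set.Ioi (0:ℝ), W n t (c - u ^ 2) := by
    have hmp := measurePreserving_add_right (volume : Measure ℝ) t
    have key := hmp.setLIntegral_comp_preimage_emb (Homeomorph.addRight t).measurableEmbedding
      (fun s => W n t (c - mfun t s ^ 2)) (Set.Ioi t)
    have hpre : (· + t) ⁻¹' Set.Ioi t = Set.Ioi (0:ℝ) := by ext u; simp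
    rw [hpre] at key
    rw [← key]
    refine setLIntegral_congr_fun measurableSet_Ioi (fun u hu => ?_)
    have hu0 : (0:ℝ) < u := hu
    have hm : mfun t (u + t) = u := by
      rw [mfun, abs_of_nonneg (by linarith)]
      simp [max_eq_left, le_of_lt hu0]
    simp only [hm]
  have hIio : ∫⁻ s in Set.Iio (-t), W n t (c - mfun t s ^ 2)
      = ∫⁻ u in Set.Ioi (0:ℝ), W n t (c - u ^ 2) := by
    have key := (Measure.measurePreserving_neg (volume : Measure ℝ)).setLIntegral_comp_preimage_emb
      (Homeomorph.neg ℝ).measurableEmbedding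
      (fun s => W n t (c - mfun t s ^ 2)) (Set.Iio (-t))
    have hpre : (Neg.neg : ℝ → ℝ) ⁻¹' Set.Iio (-t) = Set.Ioi t := by
      ext s; simp
    rw [hpre] at key
    rw [← key]
    have heq : ∀ s, mfun t (-s) = mfun t s := fun s => by simp [mfun]
    simp only [heq]
    exact hIoi
  have heven : ∀ s : ℝ, W n t (c - (-s) ^ 2) = W n t (c - s ^ 2) := fun s => by ring_nf
  have hcompl : (Set.Icc (-t) t)ᶜ = Set.Iio (-t) ∪ Set.Ioi t := by
    ext s
    simp only [Set.mem_compl_iff, Set.mem_Icc, not_and_or, not_le, Set.mem_union,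
      Set.mem_Iio, Set.mem_Ioi]
  rw [W_fubini, ← lintegral_add_compl _ (measurableSet_Icc (a := -t) (b := t)),
    hcompl, lintegral_union measurableSet_Ioi
      ((Set.Iic_disjoint_Ioi (neg_le_self ht)).mono Set.Iio_subset_Iic_self le_rfl),
    hIcc, hIio, hIoi,
    lintegral_even_split (G := fun s => W n t (c - s ^ 2)) heven, two_mul, two_mul]

lemma W_formula (n : ℕ) (t : ℝ) (ht : 0 ≤ t) (c : ℝ) :
    W n t c = ∑ k ∈ Finset.range (n+1),
      (n.choose k : ℝ≥0∞) * ENNReal.ofReal (2*t) ^ (n-k) * W k 0 c := by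
  induction n generalizing c with
  | zero => simp [W_zero_dim t c, W_zero_dim 0 c]
  | succ n ih =>
    set a := ENNReal.ofReal (2*t) with ha
    have hmeas : ∀ (k : ℕ) (c : ℝ), Measurable fun s : ℝ => W k 0 (c - s ^ 2) :=
      fun k c => (W_measurable k 0).comp (by fun_prop)
    have hpure : ∀ (k : ℕ) (c : ℝ), ∫⁻ s : ℝ, W k 0 (c - s ^ 2) = W (k+1) 0 c := by
      intro k c
      rw [W_succ k 0 c le_rfl]
      simp
    have h1 : ∫⁻ s : ℝ, W n t (c - s ^ 2)
        = ∑ k ∈ Finset.range (n+1), (n.choose k : ℝ≥0∞) * a ^ (n-k) * W (k+1) 0 c := by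
      rw [lintegral_congr fun s => ih (c - s ^ 2)]
      rw [lintegral_finset_sum _ fun k _ => (hmeas k c).const_mul _]
      refine Finset.sum_congr rfl fun k _ => ?_
      rw [lintegral_const_mul _ (hmeas k c), hpure]
    rw [W_succ n t c ht, ih c, h1, Finset.mul_sum]
    have hS1 : ∑ k ∈ Finset.range (n+1), a * ((n.choose k : ℝ≥0∞) * a ^ (n-k) * W k 0 c)
        = ∑ k ∈ Finset.range (n+2), (n.choose k : ℝ≥0∞) * a ^ (n+1-k) * W k 0 c := by
      conv_rhs => rw [Finset.sum_range_succ]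
      simp only [Nat.choose_succ_self, Nat.cast_zero, zero_mul, add_zero]
      refine Finset.sum_congr rfl fun k hk => ?_
      have hk' : k ≤ n := Nat.lt_succ_iff.mp (Finset.mem_range.mp hk)
      rw [Nat.succ_sub hk', pow_succ]
      ring
    rw [hS1]
    rw [Finset.sum_range_succ' (fun k => ((n+1).choose k : ℝ≥0∞) * a ^ (n+1-k) * W k 0 c) (n+1)]
    rw [Finset.sum_range_succ' (fun k => ((n).choose k : ℝ≥0∞) * a ^ (n+1-k) * W k 0 c) (n+1)]
    simp only [Nat.choose_succ_succ, Nat.cast_add, Nat.choose_zero_right, Nat.cast_one, one_mul,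
      Nat.sub_zero, Nat.succ_sub_succ, add_mul]
    rw [Finset.sum_add_distrib]
    abel

lemma W_eval (k : ℕ) : W k 0 1
    = ENNReal.ofReal (Real.pi ^ ((k:ℝ)/2) / Real.Gamma (1 + (k:ℝ)/2)) := by
  rcases Nat.eq_zero_or_pos k with hk | hk
  · subst hk
    rw [W_zero_dim]
    norm_num [Real.Gamma_one]
  · have : Nonempty (Fin k) := Fin.pos_iff_nonempty.mp hk
    have hmp := (EuclideanSpace.volume_preserving_symm_measurableEquiv_toLp (Fin k)).symm
    have hball := EuclideanSpace.volume_closedBall (Fin k) 0 1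
    have hpre := hmp.measure_preimage
      (measurableSet_closedBall
        (x := (0 : EuclideanSpace ℝ (Fin k))) (ε := 1)).nullMeasurableSet
    have hset : (MeasurableEquiv.toLp 2 (Fin k → ℝ)).symm.symm ⁻¹'
        (Metric.closedBall (0 : EuclideanSpace ℝ (Fin k)) 1)
        = {x : Fin k → ℝ | ∑ i, mfun 0 (x i) ^ 2 ≤ 1} := by
      rw [EuclideanSpace.closedBall_zero_eq _ zero_le_one]
      ext x
      simp [MeasurableEquiv.symm_symm, MeasurableEquiv.coe_toLp, mfun, sq_abs]
    rw [hset] at hpre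
    rw [W, hpre, hball]
    simp only [Fintype.card_fin, ENNReal.ofReal_one, one_pow, one_mul]
    congr 1
    rw [Real.sqrt_eq_rpow, ← Real.rpow_natCast (Real.pi ^ (1/2:ℝ)) k,
      ← Real.rpow_mul Real.pi_pos.le, add_comm (1:ℝ) ((k:ℝ)/2)]
    norm_num
    rw [show (1/2 * (k:ℝ)) = (k:ℝ)/2 by ring]

lemma set_eq (n : ℕ) (t : ℝ) (ht : 0 ≤ t) :
    Metric.closedBall (0 : EuclideanSpace ℝ (Fin n)) 1 +
      t • {x : EuclideanSpace ℝ (Fin n) | ∀ i, |x i| ≤ 1}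
    = {x : EuclideanSpace ℝ (Fin n) | ∑ i, mfun t (x i) ^ 2 ≤ 1} := by
  ext x
  constructor
  · rintro ⟨b, hb, c, hc, rfl⟩
    rw [Set.mem_smul_set] at hc
    obtain ⟨y, hy, rfl⟩ := hc
    rw [Metric.mem_closedBall, dist_zero_right] at hb
    have hbn : Real.sqrt (∑ i, b i ^ 2) ≤ 1 := by
      calc Real.sqrt (∑ i, b i ^ 2) = ‖b‖ := by
            rw [EuclideanSpace.norm_eq]; simp [sq_abs]
        _ ≤ 1 := hb
    have hsum : ∑ i, b i ^ 2 ≤ 1 := by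
      have h0 : (0:ℝ) ≤ ∑ i, b i ^ 2 := Finset.sum_nonneg fun _ _ => sq_nonneg _
      nlinarith [Real.sq_sqrt h0, Real.sqrt_nonneg (∑ i, b i ^ 2)]
    refine le_trans (Finset.sum_le_sum fun i _ => ?_) hsum
    have hyi := hy i
    have : |(b + t • y) i| ≤ |b i| + t := by
      have : (b + t • y) i = b i + t * y i := rfl
      rw [this]
      calc |b i + t * y i| ≤ |b i| + |t * y i| := abs_add_le _ _
        _ ≤ |b i| + t := by
            rw [abs_mul, abs_of_nonneg ht]
            have : t * |y i| ≤ t * 1 := mul_le_mul_of_nonneg_left hyi ht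
            linarith
    have hm : mfun t ((b + t • y) i) ≤ |b i| := by
      rw [mfun]
      exact max_le (by linarith) (abs_nonneg _)
    calc mfun t ((b + t • y) i) ^ 2 ≤ |b i| ^ 2 :=
          pow_le_pow_left₀ (le_max_right _ _) hm 2
      _ = b i ^ 2 := sq_abs _
  · intro hx
    simp only [Set.mem_setOf_eq] at hx
    set p : EuclideanSpace ℝ (Fin n) := WithLp.toLp 2 fun i => max (min (x i) t) (-t) with hp
    set b : EuclideanSpace ℝ (Fin n) := x - p with hb
    have habs : ∀ i, |b i| = mfun t (x i) := by
      intro i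
      have hbi : b i = x i - max (min (x i) t) (-t) := rfl
      rcases le_total (x i) t with h1 | h1
      · rcases le_total (-t) (x i) with h2 | h2
        · have : b i = 0 := by rw [hbi, min_eq_left h1, max_eq_left h2]; ring
          rw [this, abs_zero, mfun,
            max_eq_right (by rw [sub_nonpos]; exact abs_le.mpr ⟨h2, h1⟩)]
        · have : b i = x i + t := by
            rw [hbi, max_eq_right (le_trans (min_le_left _ _) h2)]; ring
          rw [this, mfun, abs_of_nonpos (by linarith), abs_of_nonpos (by linarith),
            max_eq_left (by linarith)]
          ring
      · have : b i = x i - t := by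
          rw [hbi, min_eq_right h1, max_eq_left (by linarith)]
        rw [this, mfun, abs_of_nonneg (by linarith), abs_of_nonneg (by linarith),
          max_eq_left (by linarith)]
    refine ⟨b, ?_, p, ?_, by simp [hb]⟩
    · rw [Metric.mem_closedBall, dist_zero_right, EuclideanSpace.norm_eq]
      rw [← Real.sqrt_one]
      apply Real.sqrt_le_sqrt
      calc ∑ i, ‖b i‖ ^ 2 = ∑ i, mfun t (x i) ^ 2 := by
            refine Finset.sum_congr rfl fun i _ => ?_
            rw [Real.norm_eq_abs, habs i]
        _ ≤ 1 := hx
    · have hpb : ∀ i, |p i| ≤ t := by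
        intro i
        rw [abs_le]
        exact ⟨le_max_right _ _, max_le (min_le_right _ _) (by linarith)⟩
      rcases eq_or_lt_of_le ht with h0 | h0
      · have hp0 : p = 0 := by
          ext i
          have := hpb i
          rw [← h0] at this
          simpa [abs_nonpos_iff] using this
        rw [hp0, ← h0]
        rw [Set.zero_smul_set ⟨0, by simp⟩]
        rfl
      · rw [Set.mem_smul_set]
        refine ⟨t⁻¹ • p, fun i => ?_, smul_inv_smul₀ (ne_of_gt h0) p⟩
        have : (t⁻¹ • p) i = t⁻¹ * p i := rfl
        rw [this, abs_mul, abs_of_nonneg (inv_nonneg.mpr ht)]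
        rw [inv_mul_le_iff₀ h0, mul_one]
        exact hpb i


/-- For all `n` and `t ≥ 0`,
`vol(B₂ⁿ + t B_∞ⁿ) = ∑_{k=0}^n C(n,k) 2^k vol_{n-k}(B₂^{n-k}) t^k`,
where `vol_{n-k}(B₂^{n-k}) = π^{(n-k)/2}/Γ(1 + (n-k)/2)`. -/
theorem volume_ball_add_cube (n : ℕ) (t : ℝ) (ht : 0 ≤ t) :
    (volume (Metric.closedBall (0 : EuclideanSpace ℝ (Fin n)) 1 +
        t • {x : EuclideanSpace ℝ (Fin n) | ∀ i, |x i| ≤ 1})).toReal =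
      ∑ k ∈ Finset.range (n + 1),
        (n.choose k : ℝ) * 2 ^ k *
          (Real.pi ^ (((n : ℝ) - k) / 2) / Real.Gamma (1 + ((n : ℝ) - k) / 2)) * t ^ k := by
  rw [set_eq n t ht]
  -- transfer to the pi space
  have hmp := (EuclideanSpace.volume_preserving_symm_measurableEquiv_toLp (Fin n)).symm
  have hSm : MeasurableSet {x : EuclideanSpace ℝ (Fin n) | ∑ i, mfun t (x i) ^ 2 ≤ 1} := by
    apply measurableSet_le _ measurable_const
    exact Finset.measurable_sum _ fun i _ =>
      ((mfun_continuous t).measurable.comp (by fun_prop)).pow_const 2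
  have hpre := hmp.measure_preimage hSm.nullMeasurableSet
  have hset : (MeasurableEquiv.toLp 2 (Fin n → ℝ)).symm.symm ⁻¹'
      {x : EuclideanSpace ℝ (Fin n) | ∑ i, mfun t (x i) ^ 2 ≤ 1}
      = {x : Fin n → ℝ | ∑ i, mfun t (x i) ^ 2 ≤ 1} := by
    ext x
    simp [MeasurableEquiv.symm_symm, MeasurableEquiv.coe_toLp]
  rw [hset] at hpre
  rw [← hpre]
  have hW : volume {x : Fin n → ℝ | ∑ i, mfun t (x i) ^ 2 ≤ 1} = W n t 1 := rfl
  rw [hW, W_formula n t ht 1]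
  have hterm : ∀ k ∈ Finset.range (n+1),
      (n.choose k : ℝ≥0∞) * ENNReal.ofReal (2*t) ^ (n-k) * W k 0 1
      = ENNReal.ofReal ((n.choose k : ℝ) * (2*t) ^ (n-k) *
          (Real.pi ^ ((k:ℝ)/2) / Real.Gamma (1 + (k:ℝ)/2))) := by
    intro k _
    rw [W_eval k, ← ENNReal.ofReal_natCast (n.choose k), ← ENNReal.ofReal_pow (by linarith),
      ← ENNReal.ofReal_mul (by positivity), ← ENNReal.ofReal_mul (by positivity)]
  rw [Finset.sum_congr rfl hterm, ← ENNReal.ofReal_sum_of_nonneg (fun k _ => by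
    have := Real.Gamma_pos_of_pos (show (0:ℝ) < 1 + (k:ℝ)/2 by positivity)
    have := Real.rpow_nonneg Real.pi_pos.le ((k:ℝ)/2)
    positivity), ENNReal.toReal_ofReal (Finset.sum_nonneg fun k _ => by
    have := Real.Gamma_pos_of_pos (show (0:ℝ) < 1 + (k:ℝ)/2 by positivity)
    have := Real.rpow_nonneg Real.pi_pos.le ((k:ℝ)/2)
    positivity)]
  rw [← Finset.sum_range_reflect (fun k => (n.choose k : ℝ) * 2 ^ k *
      (Real.pi ^ (((n:ℝ) - k)/2) / Real.Gamma (1 + ((n:ℝ) - k)/2)) * t ^ k) (n+1)]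
  refine Finset.sum_congr rfl fun k hk => ?_
  have hk' : k ≤ n := Nat.lt_succ_iff.mp (Finset.mem_range.mp hk)
  simp only [Nat.add_sub_cancel]
  have hcast : (n:ℝ) - ((n-k:ℕ):ℝ) = (k:ℝ) := by
    rw [Nat.cast_sub hk']; ring
  rw [Nat.choose_symm hk', hcast, mul_pow]
  ring
end

section
/- For every γ > 0 there is n₀ such that for all n ≥ n₀ and all t with t ≥ (√(2/π) + γ) · √n · vol_n(B₁ⁿ)^{1/n} / vol_n(B₂ⁿ)^{1/n}, one has 1/2 ≤ vol_n( (B₂ⁿ / vol_n(B₂ⁿ)^{1/n}) ∩ t · (B₁ⁿ / vol_n(B₁ⁿ)^{1/n}) ) ≤ 1. -/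
open MeasureTheory
open scoped Pointwise

/-- The Euclidean unit ball `B₂ⁿ`. -/
noncomputable def B2 (n : ℕ) : Set (EuclideanSpace ℝ (Fin n)) :=
  Metric.closedBall 0 1

/-- The cross-polytope `B₁ⁿ = {x : ∑|xᵢ| ≤ 1}`. -/
def B1 (n : ℕ) : Set (EuclideanSpace ℝ (Fin n)) :=
  {x | ∑ i, |x i| ≤ 1}

namespace SSAux

open MeasureTheory Measure Metric Set Real
open scoped Pointwise ENNReal NNReal

variable {n : ℕ}

local notation "Eu" => EuclideanSpace ℝ (Fin n)

lemma nontrivial_Eu (hn : 0 < n) : Nontrivial Eu := by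
  have : Module.finrank ℝ Eu = n := finrank_euclideanSpace_fin
  exact Module.nontrivial_of_finrank_pos (R := ℝ) (M := Eu) (by rw [this]; exact hn)

lemma polar_integral (hn : 0 < n) (f : Eu → ℝ) :
    ∫ x, f x = ∫ p : sphere (0 : Eu) 1 × Ioi (0 : ℝ),
      f ((p.2 : ℝ) • (p.1 : Eu))
      ∂((volume : Measure Eu).toSphere.prod (Measure.volumeIoiPow (n - 1))) := by
  haveI : Nontrivial Eu := nontrivial_Eu hn
  have hdim : Module.finrank ℝ Eu = n := finrank_euclideanSpace_fin
  have e1 : ∫ x, f x ∂(volume : Measure Eu)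
      = ∫ x : ({0}ᶜ : Set Eu), f x.1 ∂((volume : Measure Eu).comap Subtype.val) := by
    rw [integral_subtype_comap (measurableSet_singleton _).compl f,
      restrict_compl_singleton]
  have e2 := ((volume : Measure Eu).measurePreserving_homeomorphUnitSphereProd).integral_comp
    (Homeomorph.measurableEmbedding _) (fun p : sphere (0 : Eu) 1 × Ioi (0 : ℝ) =>
      f ((p.2 : ℝ) • (p.1 : Eu)))
  have hd1 : Module.finrank ℝ Eu - 1 = n - 1 := by rw [hdim]
  rw [e1, ← hd1, ← e2]
  refine integral_congr_ae (Filter.Eventually.of_forall fun x => ?_)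
  have hx : (x : Eu) ≠ 0 := x.2
  simp [homeomorphUnitSphereProd, smul_inv_smul₀ (norm_ne_zero_iff.2 hx)]

lemma polar_mul (hn : 0 < n) (h : Eu → ℝ) (d : ℕ)
    (hd : ∀ r : ℝ, 0 < r → ∀ x : Eu, h (r • x) = r ^ d * h x)
    (g : ℝ → ℝ) :
    ∫ x : Eu, h x * g ‖x‖
      = (∫ θ : sphere (0 : Eu) 1, h (θ : Eu) ∂(volume : Measure Eu).toSphere)
        * ∫ r in Ioi (0 : ℝ), r ^ (n - 1 + d) * g r := by
  rw [polar_integral hn]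
  have e1 : ∀ p : sphere (0 : Eu) 1 × Ioi (0 : ℝ),
      h ((p.2 : ℝ) • (p.1 : Eu)) * g ‖(p.2 : ℝ) • (p.1 : Eu)‖
        = h (p.1 : Eu) * ((p.2 : ℝ) ^ d * g (p.2 : ℝ)) := by
    rintro ⟨⟨θ, hθ⟩, ⟨r, hr⟩⟩
    rw [mem_sphere_zero_iff_norm] at hθ
    rw [mem_Ioi] at hr
    simp only [norm_smul, hθ, mul_one, Real.norm_eq_abs, abs_of_pos hr, hd r hr]
    ring
  simp only [e1]
  rw [integral_prod_mul (f := fun θ : sphere (0 : Eu) 1 => h (θ : Eu))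
    (g := fun r : Ioi (0 : ℝ) => (r : ℝ) ^ d * g (r : ℝ))]
  congr 1
  rw [Measure.volumeIoiPow]
  simp only [ENNReal.ofReal]
  rw [integral_withDensity_eq_integral_smul
    (by measurability : Measurable fun r : Ioi (0 : ℝ) => Real.toNNReal ((r : ℝ) ^ (n - 1)))]
  rw [integral_subtype_comap measurableSet_Ioi
    (fun a : ℝ => Real.toNNReal (a ^ (n - 1)) • (a ^ d * g a))]
  refine setIntegral_congr_fun measurableSet_Ioi fun x hx => ?_
  rw [NNReal.smul_def, Real.coe_toNNReal _ (pow_nonneg (le_of_lt hx) _), pow_add, smul_eq_mul]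
  ring

lemma radial_gauss (k : ℕ) :
    ∫ r in Ioi (0 : ℝ), r ^ k * Real.exp (-r ^ 2)
      = (1 / 2) * Real.Gamma (((k : ℝ) + 1) / 2) := by
  have := integral_rpow_mul_exp_neg_rpow (p := 2) (q := (k : ℝ)) (by norm_num)
    (lt_of_lt_of_le neg_one_lt_zero (Nat.cast_nonneg k))
  rw [← this]
  refine setIntegral_congr_fun measurableSet_Ioi fun x hx => ?_
  rw [Real.rpow_natCast, show ((2:ℝ)) = ((2:ℕ):ℝ) by norm_num, Real.rpow_natCast]

lemma radial_ind (k : ℕ) :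
    ∫ r in Ioi (0 : ℝ), r ^ k * (if r ≤ 1 then (1:ℝ) else 0)
      = 1 / ((k : ℝ) + 1) := by
  have e1 : ∀ r ∈ Ioi (0:ℝ), r ^ k * (if r ≤ 1 then (1:ℝ) else 0)
      = (Iic (1:ℝ)).indicator (fun r => r ^ k) r := by
    intro r _
    by_cases h : r ≤ 1 <;> simp [indicator_apply, h]
  rw [setIntegral_congr_fun measurableSet_Ioi e1, integral_indicator measurableSet_Iic,
    Measure.restrict_restrict measurableSet_Iic]
  have : Iic (1:ℝ) ∩ Ioi 0 = Ioc 0 1 := by ext x; constructor <;> (intro h; exact ⟨h.2, h.1⟩)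
  rw [this, ← intervalIntegral.integral_of_le zero_le_one, integral_pow]
  norm_num

lemma oneD_gauss (k : ℕ) :
    ∫ u : ℝ, |u| ^ k * Real.exp (-u ^ 2) = Real.Gamma (((k : ℝ) + 1) / 2) := by
  have e1 : (fun u : ℝ => |u| ^ k * Real.exp (-u ^ 2))
      = fun u : ℝ => (fun t : ℝ => t ^ k * Real.exp (-t ^ 2)) |u| := by
    funext u; simp [sq_abs]
  rw [e1, integral_comp_abs (f := fun t : ℝ => t ^ k * Real.exp (-t ^ 2)), radial_gauss]
  ring

lemma norm_sq_eq (x : Eu) : ‖x‖ ^ 2 = ∑ i, (x i) ^ 2 := by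
  rw [EuclideanSpace.norm_eq]
  rw [Real.sq_sqrt (by positivity)]
  simp [sq_abs]

lemma gauss_prod (a : Fin n → ℕ) :
    ∫ x : Eu, (∏ i, |x i| ^ a i) * Real.exp (-‖x‖ ^ 2)
      = ∏ i, Real.Gamma (((a i : ℝ) + 1) / 2) := by
  have e1 : ∀ x : Eu, (∏ i, |x i| ^ a i) * Real.exp (-‖x‖ ^ 2)
      = ∏ i, (|x i| ^ a i * Real.exp (-(x i) ^ 2)) := by
    intro x
    rw [norm_sq_eq, Finset.prod_mul_distrib, ← Real.exp_sum]
    congr 2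
    rw [← Finset.sum_neg_distrib]
  simp only [e1]
  have e2 := (EuclideanSpace.volume_preserving_symm_measurableEquiv_toLp (Fin n)).symm.integral_comp
    (MeasurableEquiv.measurableEmbedding _)
    (fun x : Eu => ∏ i, (|x i| ^ a i * Real.exp (-(x i) ^ 2)))
  rw [← e2]
  have e3 : ∀ y : Fin n → ℝ, ∀ i,
      ((MeasurableEquiv.toLp 2 (Fin n → ℝ)).symm.symm y) i = y i := fun y i => rfl
  simp only [e3]
  rw [volume_pi, MeasureTheory.integral_fintype_prod_eq_prod (ι := Fin n)
    (f := fun i u => |u| ^ a i * Real.exp (-u ^ 2)) (μ := fun _ => volume)]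
  exact Finset.prod_congr rfl fun i _ => oneD_gauss (a i)

lemma prod_homog (a : Fin n → ℕ) (r : ℝ) (hr : 0 < r) (x : Eu) :
    (∏ i, |(r • x) i| ^ a i) = r ^ (∑ i, a i) * ∏ i, |x i| ^ a i := by
  have e : ∀ i, |(r • x) i| ^ a i = r ^ a i * |x i| ^ a i := by
    intro i
    have : (r • x) i = r * x i := rfl
    rw [this, abs_mul, abs_of_pos hr, mul_pow]
  rw [Finset.prod_congr rfl fun i _ => e i, Finset.prod_mul_distrib,
    Finset.prod_pow_eq_pow_sum]

/-- The fundamental moment computation. -/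
lemma moment (hn : 0 < n) (a : Fin n → ℕ) :
    (∫ x in closedBall (0 : Eu) 1, ∏ i, |x i| ^ a i)
      * Real.Gamma (((n : ℝ) + (∑ i, a i : ℕ)) / 2 + 1)
      = ∏ i, Real.Gamma (((a i : ℝ) + 1) / 2) := by
  set d : ℕ := ∑ i, a i with hdd
  set h : Eu → ℝ := fun x => ∏ i, |x i| ^ a i with hh
  have hhom : ∀ r : ℝ, 0 < r → ∀ x : Eu, h (r • x) = r ^ d * h x :=
    fun r hr x => prod_homog a r hr x
  have hcast : ((n - 1 + d : ℕ) : ℝ) + 1 = (n : ℝ) + d := by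
    have : n - 1 + d + 1 = n + d := by omega
    rw [← Nat.cast_add_one, this]; push_cast; ring
  -- Gaussian side
  have hA : (∫ θ : sphere (0 : Eu) 1, h (θ : Eu) ∂(volume : Measure Eu).toSphere)
      * ((1 / 2) * Real.Gamma (((n : ℝ) + d) / 2))
      = ∏ i, Real.Gamma (((a i : ℝ) + 1) / 2) := by
    rw [← gauss_prod a]
    have := polar_mul hn h d hhom (fun r => Real.exp (-r ^ 2))
    rw [radial_gauss, hcast] at this
    exact this.symm
  -- ball side
  have hB : ∫ x in closedBall (0 : Eu) 1, h x
      = (∫ θ : sphere (0 : Eu) 1, h (θ : Eu) ∂(volume : Measure Eu).toSphere)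
        * (1 / ((n : ℝ) + d)) := by
    have e1 : ∫ x in closedBall (0 : Eu) 1, h x
        = ∫ x : Eu, h x * (if ‖x‖ ≤ 1 then (1:ℝ) else 0) := by
      rw [← integral_indicator (measurableSet_closedBall)]
      refine integral_congr_ae (Filter.Eventually.of_forall fun x => ?_)
      by_cases hx : ‖x‖ ≤ 1
      · simp [indicator_apply, mem_closedBall_zero_iff, hx]
      · simp [indicator_apply, mem_closedBall_zero_iff, hx]
    rw [e1, polar_mul hn h d hhom (fun r => if r ≤ 1 then (1:ℝ) else 0),
      radial_ind, hcast]
  rw [hB]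
  rw [← hA]
  have hnd : (0:ℝ) < (n : ℝ) + d := by positivity
  have hgamma : Real.Gamma (((n : ℝ) + d) / 2 + 1)
      = (((n : ℝ) + d) / 2) * Real.Gamma (((n : ℝ) + d) / 2) := by
    rw [Real.Gamma_add_one (by positivity)]
  rw [hgamma]
  field_simp

lemma int_abs (hn : 0 < n) (i : Fin n) :
    (∫ x in closedBall (0 : Eu) 1, |x i|) * Real.Gamma (((n : ℝ) + 3) / 2)
      = Real.sqrt π ^ (n - 1) := by
  have := moment hn (fun j => if j = i then 1 else 0)
  have e1 : ∀ x : Eu, (∏ j, |x j| ^ (if j = i then 1 else 0)) = |x i| := by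
    intro x
    rw [Finset.prod_congr rfl (fun j _ => show |x j| ^ (if j = i then 1 else 0)
      = if j = i then |x j| else 1 by by_cases hj : j = i <;> simp [hj]),
      Finset.prod_ite_eq' Finset.univ i (fun j => |x j|)]
    simp
  have e2 : (∑ j, if j = i then 1 else 0) = 1 := by
    rw [Finset.sum_ite_eq' Finset.univ i (fun _ => 1)]; simp
  have e3 : (∏ j, Real.Gamma ((((if j = i then 1 else 0 : ℕ) : ℝ) + 1) / 2))
      = Real.sqrt π ^ (n - 1) := by
    rw [Finset.prod_congr rfl (fun j _ =>
        show Real.Gamma ((((if j = i then 1 else 0 : ℕ) : ℝ) + 1) / 2)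
          = if j = i then 1 else Real.sqrt π by
        by_cases hj : j = i <;>
          simp [hj, Real.Gamma_one, ← Real.Gamma_one_half_eq] <;> norm_num)]
    rw [← Finset.mul_prod_erase Finset.univ _ (Finset.mem_univ i), if_pos rfl, one_mul]
    rw [Finset.prod_congr rfl (fun j hj => if_neg (Finset.mem_erase.mp hj).1),
      Finset.prod_const, Finset.card_erase_of_mem (Finset.mem_univ i), Finset.card_univ,
      Fintype.card_fin]
  simp only [e1, e2] at this
  rw [← e3, ← this]
  norm_num
  left
  congr 1
  ring

lemma int_sq (hn : 0 < n) (i : Fin n) :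
    (∫ x in closedBall (0 : Eu) 1, |x i| ^ 2) * Real.Gamma ((n : ℝ) / 2 + 2)
      = (Real.sqrt π / 2) * Real.sqrt π ^ (n - 1) := by
  have := moment hn (fun j => if j = i then 2 else 0)
  have e1 : ∀ x : Eu, (∏ j, |x j| ^ (if j = i then 2 else 0)) = |x i| ^ 2 := by
    intro x
    rw [Finset.prod_congr rfl (fun j _ => show |x j| ^ (if j = i then 2 else 0)
      = if j = i then |x j| ^ 2 else 1 by by_cases hj : j = i <;> simp [hj]),
      Finset.prod_ite_eq' Finset.univ i (fun j => |x j| ^ 2)]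
    simp
  have e2 : (∑ j, if j = i then 2 else 0) = 2 := by
    rw [Finset.sum_ite_eq' Finset.univ i (fun _ => 2)]; simp
  have e3 : (∏ j, Real.Gamma ((((if j = i then 2 else 0 : ℕ) : ℝ) + 1) / 2))
      = (Real.sqrt π / 2) * Real.sqrt π ^ (n - 1) := by
    rw [Finset.prod_congr rfl (fun j _ =>
        show Real.Gamma ((((if j = i then 2 else 0 : ℕ) : ℝ) + 1) / 2)
          = if j = i then Real.sqrt π / 2 else Real.sqrt π by
        by_cases hj : j = i
        · simp only [hj, if_true, eq_self_iff_true]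
          have h32 : (((2:ℕ):ℝ) + 1) / 2 = 1/2 + 1 := by norm_num
          rw [h32, Real.Gamma_add_one (by norm_num), Real.Gamma_one_half_eq]
          ring
        · simp only [hj, if_neg hj, if_false]
          rw [show (((0:ℕ):ℝ) + 1) / 2 = 1/2 by norm_num, Real.Gamma_one_half_eq])]
    rw [← Finset.mul_prod_erase Finset.univ _ (Finset.mem_univ i), if_pos rfl]
    rw [Finset.prod_congr rfl (fun j hj => if_neg (Finset.mem_erase.mp hj).1),
      Finset.prod_const, Finset.card_erase_of_mem (Finset.mem_univ i), Finset.card_univ,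
      Fintype.card_fin]
  simp only [e1, e2] at this
  have harg : (((n:ℝ) + ((2:ℕ):ℝ)) / 2 + 1) = (n : ℝ) / 2 + 2 := by push_cast; ring
  rw [e3] at this
  rw [← this]
  congr 2
  push_cast
  ring

lemma int_cross (hn : 0 < n) {i j : Fin n} (hij : i ≠ j) :
    (∫ x in closedBall (0 : Eu) 1, |x i| * |x j|) * Real.Gamma ((n : ℝ) / 2 + 2)
      = Real.sqrt π ^ (n - 2) := by
  have := moment hn (fun k => (if k = i then 1 else 0) + (if k = j then 1 else 0))
  have e1 : ∀ x : Eu,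
      (∏ k, |x k| ^ ((if k = i then 1 else 0) + (if k = j then 1 else 0)))
        = |x i| * |x j| := by
    intro x
    have : ∀ k : Fin n, |x k| ^ ((if k = i then 1 else 0) + (if k = j then 1 else 0))
        = (if k = i then |x k| else 1) * (if k = j then |x k| else 1) := by
      intro k
      rw [pow_add]
      congr 1 <;> (split <;> simp)
    rw [Finset.prod_congr rfl (fun k _ => this k), Finset.prod_mul_distrib,
      Finset.prod_ite_eq' Finset.univ i (fun k => |x k|),
      Finset.prod_ite_eq' Finset.univ j (fun k => |x k|)]
    simp
  have e2 : (∑ k, ((if k = i then 1 else 0) + (if k = j then 1 else 0))) = 2 := by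
    rw [Finset.sum_add_distrib, Finset.sum_ite_eq' Finset.univ i (fun _ => 1),
      Finset.sum_ite_eq' Finset.univ j (fun _ => 1)]
    simp
  have e3 : (∏ k, Real.Gamma ((((((if k = i then 1 else 0) + (if k = j then 1 else 0)) : ℕ) : ℝ) + 1) / 2))
      = Real.sqrt π ^ (n - 2) := by
    have hterm : ∀ k : Fin n,
        Real.Gamma ((((((if k = i then 1 else 0) + (if k = j then 1 else 0)) : ℕ) : ℝ) + 1) / 2)
          = if k = i then 1 else if k = j then 1 else Real.sqrt π := by
      intro k
      by_cases hki : k = i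
      · have hkj : ¬ k = j := by rw [hki]; exact hij
        rw [if_pos hki, if_neg hkj, if_pos hki]
        norm_num [Real.Gamma_one]
      · by_cases hkj : k = j
        · rw [if_neg hki, if_pos hkj, if_neg hki, if_pos hkj]
          norm_num [Real.Gamma_one]
        · simp only [hki, hkj, if_false]
          rw [show ((((0:ℕ) + 0 : ℕ):ℝ) + 1) / 2 = 1/2 by norm_num, Real.Gamma_one_half_eq]
    rw [Finset.prod_congr rfl (fun k _ => hterm k)]
    rw [← Finset.mul_prod_erase Finset.univ _ (Finset.mem_univ i), if_pos rfl, one_mul]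
    have hjmem : j ∈ Finset.univ.erase i := Finset.mem_erase.mpr ⟨(Ne.symm hij), Finset.mem_univ j⟩
    rw [← Finset.mul_prod_erase _ _ hjmem, if_neg (Ne.symm hij), if_pos rfl, one_mul]
    have hconst : ∀ k ∈ (Finset.univ.erase i).erase j,
        (if k = i then (1:ℝ) else if k = j then 1 else Real.sqrt π) = Real.sqrt π := by
      intro k hk
      obtain ⟨hkj, hk2⟩ := Finset.mem_erase.mp hk
      obtain ⟨hki, _⟩ := Finset.mem_erase.mp hk2
      rw [if_neg hki, if_neg hkj]
    rw [Finset.prod_congr rfl hconst, Finset.prod_const,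
      Finset.card_erase_of_mem hjmem, Finset.card_erase_of_mem (Finset.mem_univ i),
      Finset.card_univ, Fintype.card_fin, Nat.sub_sub]
  simp only [e1, e2] at this
  rw [e3] at this
  rw [← this]
  congr 2
  push_cast
  ring

lemma cont_abs (i : Fin n) : Continuous fun x : Eu => |x i| :=
  continuous_abs.comp (EuclideanSpace.proj (𝕜 := ℝ) i).continuous

lemma integrableOn_ball {f : Eu → ℝ} (hf : Continuous f) (R : ℝ) :
    IntegrableOn f (closedBall (0 : Eu) R) volume :=
  hf.continuousOn.integrableOn_compact (isCompact_closedBall 0 R)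

lemma intS (hn : 0 < n) :
    (∫ x in closedBall (0 : Eu) 1, ∑ i, |x i|) * Real.Gamma (((n : ℝ) + 3) / 2)
      = n * Real.sqrt π ^ (n - 1) := by
  rw [integral_finset_sum Finset.univ
    (fun i _ => integrableOn_ball (cont_abs i) 1), Finset.sum_mul]
  rw [Finset.sum_congr rfl (fun i _ => int_abs hn i), Finset.sum_const, Finset.card_univ,
    Fintype.card_fin, nsmul_eq_mul]

lemma intS2 (hn : 0 < n) :
    (∫ x in closedBall (0 : Eu) 1, (∑ i, |x i|) ^ 2) * Real.Gamma ((n : ℝ) / 2 + 2)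
      = n * ((Real.sqrt π / 2) * Real.sqrt π ^ (n - 1))
        + (n : ℝ) * ((n : ℝ) - 1) * Real.sqrt π ^ (n - 2) := by
  have e1 : ∀ x : Eu, (∑ i, |x i|) ^ 2 = ∑ i, ∑ j, |x i| * |x j| := by
    intro x
    rw [sq, Finset.sum_mul_sum]
  have key : ∀ i : Fin n,
      (∫ x in closedBall (0 : Eu) 1, ∑ j, |x i| * |x j|) * Real.Gamma ((n : ℝ) / 2 + 2)
        = (Real.sqrt π / 2) * Real.sqrt π ^ (n - 1)
          + ((n : ℝ) - 1) * Real.sqrt π ^ (n - 2) := by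
    intro i
    rw [integral_finset_sum Finset.univ (f := fun j (x : Eu) => |x i| * |x j|)
      (fun j _ => integrableOn_ball ((cont_abs i).mul (cont_abs j)) 1)]
    rw [← Finset.add_sum_erase Finset.univ _ (Finset.mem_univ i), add_mul, Finset.sum_mul]
    congr 1
    · have esq : ∀ x ∈ closedBall (0:Eu) 1, |x i| * |x i| = |x i| ^ 2 :=
        fun x _ => (sq (|x i|)).symm
      rw [setIntegral_congr_fun measurableSet_closedBall esq]
      exact int_sq hn i
    · rw [Finset.sum_congr rfl (fun j hj =>
        int_cross hn (Ne.symm (Finset.mem_erase.mp hj).1))]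
      rw [Finset.sum_const, Finset.card_erase_of_mem (Finset.mem_univ i), Finset.card_univ,
        Fintype.card_fin, nsmul_eq_mul, Nat.cast_sub hn, Nat.cast_one]
  rw [setIntegral_congr_fun measurableSet_closedBall (fun x _ => e1 x)]
  rw [integral_finset_sum Finset.univ (f := fun i (x : Eu) => ∑ j, |x i| * |x j|)
    (fun i _ => integrableOn_ball
    (continuous_finset_sum _ (fun j _ => (cont_abs i).mul (cont_abs j))) 1)]
  rw [Finset.sum_mul, Finset.sum_congr rfl (fun i _ => key i), Finset.sum_const,
    Finset.card_univ, Fintype.card_fin, nsmul_eq_mul]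
  ring

/-- Scaling of the integral of a homogeneous function over a ball. -/
lemma scale_ball (h : Eu → ℝ) (d : ℕ)
    (hd : ∀ r : ℝ, 0 < r → ∀ x : Eu, h (r • x) = r ^ d * h x)
    {R : ℝ} (hR : 0 < R) :
    ∫ x in closedBall (0 : Eu) R, h x
      = R ^ (n + d) * ∫ x in closedBall (0 : Eu) 1, h x := by
  have hdim : Module.finrank ℝ Eu = n := finrank_euclideanSpace_fin
  have e0 := integral_comp_smul (volume : Measure Eu)
    ((closedBall (0 : Eu) R).indicator h) R
  have e1 : ∀ x : Eu, (closedBall (0 : Eu) R).indicator h (R • x)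
      = R ^ d * (closedBall (0 : Eu) 1).indicator h x := by
    intro x
    by_cases hx : x ∈ closedBall (0 : Eu) 1
    · have hmem : R • x ∈ closedBall (0 : Eu) R := by
        rw [mem_closedBall_zero_iff] at hx ⊢
        rw [norm_smul, Real.norm_eq_abs, abs_of_pos hR]
        calc R * ‖x‖ ≤ R * 1 := by nlinarith
        _ = R := mul_one R
      rw [indicator_of_mem hmem, indicator_of_mem hx, hd R hR x]
    · have hmem : R • x ∉ closedBall (0 : Eu) R := by
        rw [mem_closedBall_zero_iff] at hx ⊢
        rw [norm_smul, Real.norm_eq_abs, abs_of_pos hR]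
        intro hc
        exact hx (by nlinarith)
      rw [indicator_of_notMem hmem, indicator_of_notMem hx, mul_zero]
  rw [funext e1, integral_const_mul, integral_indicator measurableSet_closedBall,
    integral_indicator measurableSet_closedBall, hdim] at e0
  have hRn : (0:ℝ) < R ^ n := pow_pos hR n
  rw [abs_of_pos (by positivity), smul_eq_mul] at e0
  rw [pow_add]
  field_simp at e0 ⊢
  linarith [e0]

lemma gamma_sq_le {x : ℝ} (hx : 0 < x) :
    Real.Gamma (x + 1/2) ^ 2 ≤ Real.Gamma x * Real.Gamma (x + 1) := by
  have hx1 : (0:ℝ) < x + 1 := by linarith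
  have hmem : x ∈ Ioi (0:ℝ) := hx
  have hmem1 : x + 1 ∈ Ioi (0:ℝ) := hx1
  have hc := Real.convexOn_log_Gamma.2 hmem hmem1 (by norm_num : (0:ℝ) ≤ 1/2)
    (by norm_num : (0:ℝ) ≤ 1/2) (by norm_num)
  simp only [smul_eq_mul, Function.comp_apply] at hc
  have harg : (1/2 : ℝ) * x + 1/2 * (x + 1) = x + 1/2 := by ring
  rw [harg] at hc
  have h1 : Real.Gamma (x + 1/2) = Real.exp (Real.log (Real.Gamma (x + 1/2))) :=
    (Real.exp_log (Real.Gamma_pos_of_pos (by linarith))).symm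
  have h2 : Real.Gamma (x + 1/2) ^ 2
      = Real.exp (2 * Real.log (Real.Gamma (x + 1/2))) := by
    rw [two_mul, Real.exp_add, ← h1, sq]
  rw [h2]
  have h3 : Real.Gamma x * Real.Gamma (x + 1)
      = Real.exp (Real.log (Real.Gamma x) + Real.log (Real.Gamma (x + 1))) := by
    rw [Real.exp_add, Real.exp_log (Real.Gamma_pos_of_pos hx),
      Real.exp_log (Real.Gamma_pos_of_pos hx1)]
  rw [h3]
  exact Real.exp_le_exp.mpr (by linarith)

variable {n : ℕ}

-- `n Γ(n/2+1) ≤ √(2n) Γ((n+3)/2)`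
lemma gamma_ineq_iii (hn : 0 < n) :
    (n : ℝ) * Real.Gamma ((n : ℝ) / 2 + 1)
      ≤ Real.sqrt (2 * n) * Real.Gamma (((n : ℝ) + 3) / 2) := by
  have hx : (0:ℝ) < ((n:ℝ) + 1) / 2 := by positivity
  have h := gamma_sq_le hx
  have e1 : ((n:ℝ) + 1) / 2 + 1/2 = (n:ℝ)/2 + 1 := by ring
  have e2 : ((n:ℝ) + 1) / 2 + 1 = ((n:ℝ) + 3) / 2 := by ring
  rw [e1, e2] at h
  -- `Γ((n+3)/2) = ((n+1)/2) Γ((n+1)/2)`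
  have e3 : Real.Gamma (((n : ℝ) + 3) / 2) = (((n:ℝ)+1)/2) * Real.Gamma (((n:ℝ)+1)/2) := by
    rw [← e2, Real.Gamma_add_one (ne_of_gt hx)]
  have hG1 : (0:ℝ) < Real.Gamma ((n:ℝ)/2 + 1) := Real.Gamma_pos_of_pos (by positivity)
  have hG3 : (0:ℝ) < Real.Gamma (((n:ℝ)+3)/2) := Real.Gamma_pos_of_pos (by positivity)
  have hGh : (0:ℝ) < Real.Gamma (((n:ℝ)+1)/2) := Real.Gamma_pos_of_pos hx
  -- from h : G1^2 ≤ Γ((n+1)/2) * Γ((n+3)/2) = 2 Γ((n+3)/2)^2/(n+1)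
  have key : ((n:ℝ) + 1) * Real.Gamma ((n:ℝ)/2 + 1) ^ 2
      ≤ 2 * Real.Gamma (((n : ℝ) + 3) / 2) ^ 2 := by
    have := mul_le_mul_of_nonneg_left h (by positivity : (0:ℝ) ≤ (n:ℝ) + 1)
    calc ((n:ℝ) + 1) * Real.Gamma ((n:ℝ)/2 + 1) ^ 2
        ≤ ((n:ℝ) + 1) * (Real.Gamma (((n:ℝ)+1)/2) * Real.Gamma (((n:ℝ)+3)/2)) := this
      _ = 2 * Real.Gamma (((n : ℝ) + 3) / 2) ^ 2 := by rw [e3]; ring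
  -- conclude by squaring comparison
  have hsq : ((n:ℝ) * Real.Gamma ((n : ℝ) / 2 + 1)) ^ 2
      ≤ (Real.sqrt (2 * n) * Real.Gamma (((n : ℝ) + 3) / 2)) ^ 2 := by
    have hs : Real.sqrt (2 * n) ^ 2 = 2 * n := Real.sq_sqrt (by positivity)
    rw [mul_pow, mul_pow, hs]
    have hnn : (1:ℝ) ≤ (n:ℝ) := by exact_mod_cast hn
    nlinarith [sq_nonneg (Real.Gamma ((n:ℝ)/2+1)), key, hG1]
  have h2 : (0:ℝ) ≤ Real.sqrt (2 * n) * Real.Gamma (((n : ℝ) + 3) / 2) := by positivity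
  nlinarith [hsq, h2, mul_pos (by exact_mod_cast hn : (0:ℝ) < (n:ℝ)) hG1]

-- `Γ((n+3)/2)^2 ≤ Γ(n/2+1) Γ(n/2+2)`
lemma gamma_ineq_ii (hn : 0 < n) :
    Real.Gamma (((n : ℝ) + 3) / 2) ^ 2
      ≤ Real.Gamma ((n : ℝ) / 2 + 1) * Real.Gamma ((n : ℝ) / 2 + 2) := by
  have hx : (0:ℝ) < (n:ℝ)/2 + 1 := by positivity
  have h := gamma_sq_le hx
  have e1 : (n:ℝ)/2 + 1 + 1/2 = ((n:ℝ) + 3) / 2 := by ring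
  have e2 : (n:ℝ)/2 + 1 + 1 = (n:ℝ)/2 + 2 := by ring
  rw [e1, e2] at h
  exact h

-- `2 Γ(n/2+2) = (n+2) Γ(n/2+1)`
lemma gamma_eq_i : 2 * Real.Gamma ((n : ℝ) / 2 + 2)
    = ((n : ℝ) + 2) * Real.Gamma ((n : ℝ) / 2 + 1) := by
  have e : (n:ℝ)/2 + 2 = ((n:ℝ)/2 + 1) + 1 := by ring
  rw [e, Real.Gamma_add_one (by positivity)]
  ring

end SSAux

open MeasureTheory Measure Metric Set Real
open scoped Pointwise ENNReal NNReal

set_option maxHeartbeats 2000000 in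
/-- For every `γ > 0` there is `n₀` such that for all `n ≥ n₀` and all
`t ≥ (√(2/π) + γ)·√n·vol(B₁ⁿ)^{1/n}/vol(B₂ⁿ)^{1/n}`, the volume of
`(B₂ⁿ/vol(B₂ⁿ)^{1/n}) ∩ t(B₁ⁿ/vol(B₁ⁿ)^{1/n})` lies between `1/2` and `1`. -/
theorem volume_normBall_inter_normCross :
    ∀ γ > (0 : ℝ), ∃ n₀ : ℕ, ∀ n ≥ n₀, ∀ t : ℝ,
      (Real.sqrt (2 / Real.pi) + γ) * Real.sqrt n *
          (volume (B1 n)).toReal ^ (1 / (n : ℝ)) / (volume (B2 n)).toReal ^ (1 / (n : ℝ)) ≤ t →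
      (1 / 2 : ℝ) ≤
          (volume ((((volume (B2 n)).toReal ^ (1 / (n : ℝ)))⁻¹ • B2 n) ∩
            t • (((volume (B1 n)).toReal ^ (1 / (n : ℝ)))⁻¹ • B1 n))).toReal ∧
        (volume ((((volume (B2 n)).toReal ^ (1 / (n : ℝ)))⁻¹ • B2 n) ∩
            t • (((volume (B1 n)).toReal ^ (1 / (n : ℝ)))⁻¹ • B1 n))).toReal ≤ 1 := by
  classical
  intro γ hγ
  refine ⟨max 2 (Nat.ceil (2 / γ ^ 2) + 1), fun n hn t ht => ?_⟩
  have hn2 : 2 ≤ n := le_trans (le_max_left _ _) hn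
  have hn1 : 0 < n := by omega
  have hnR : (0:ℝ) < (n:ℝ) := by exact_mod_cast hn1
  have hn2R : (2:ℝ) ≤ (n:ℝ) := by exact_mod_cast hn2
  have hnγ : 2 / γ ^ 2 < (n : ℝ) := by
    have h2 : Nat.ceil (2 / γ ^ 2) + 1 ≤ n := le_trans (le_max_right _ _) hn
    calc 2 / γ ^ 2 ≤ (Nat.ceil (2 / γ ^ 2) : ℝ) := Nat.le_ceil _
      _ < ((Nat.ceil (2 / γ ^ 2) + 1 : ℕ) : ℝ) := by exact_mod_cast Nat.lt_succ_self _
      _ ≤ n := by exact_mod_cast h2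
  haveI : Nonempty (Fin n) := ⟨⟨0, hn1⟩⟩
  set p : ℝ := Real.sqrt π with hpdef
  have hp : 0 < p := Real.sqrt_pos.mpr Real.pi_pos
  set G1 : ℝ := Real.Gamma ((n : ℝ) / 2 + 1) with hG1def
  set G2 : ℝ := Real.Gamma ((n : ℝ) / 2 + 2) with hG2def
  set G3 : ℝ := Real.Gamma (((n : ℝ) + 3) / 2) with hG3def
  have hG1 : 0 < G1 := Real.Gamma_pos_of_pos (by positivity)
  have hG2 : 0 < G2 := Real.Gamma_pos_of_pos (by positivity)
  have hG3 : 0 < G3 := Real.Gamma_pos_of_pos (by positivity)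
  -- volume of B2
  have hv2E : volume (B2 n) = ENNReal.ofReal (p ^ n / G1) := by
    rw [B2, EuclideanSpace.volume_closedBall, Fintype.card_fin, ENNReal.ofReal_one, one_pow,
      one_mul]
  set v2 : ℝ := (volume (B2 n)).toReal with hv2def
  have hv2R : v2 = p ^ n / G1 := by
    rw [hv2def, hv2E, ENNReal.toReal_ofReal (by positivity)]
  have hv2 : 0 < v2 := by rw [hv2R]; positivity
  -- volume of B1
  have hB1closed : IsClosed (B1 n) := isClosed_le
    (continuous_finset_sum _ (fun i _ => SSAux.cont_abs i)) continuous_const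
  have hB1sub : B1 n ⊆ Metric.closedBall (0 : EuclideanSpace ℝ (Fin n)) 1 := by
    intro x hx
    have h1 : ∑ i, |x i| ≤ 1 := hx
    have h2 : ‖x‖ ^ 2 = ∑ i, |x i| ^ 2 := by
      rw [SSAux.norm_sq_eq]; exact Finset.sum_congr rfl fun i _ => (sq_abs _).symm
    have h3 : ∑ i, |x i| ^ 2 ≤ (∑ i, |x i|) ^ 2 :=
      Finset.sum_sq_le_sq_sum_of_nonneg (fun i _ => abs_nonneg _)
    have h4 : (0:ℝ) ≤ ∑ i, |x i| := Finset.sum_nonneg fun i _ => abs_nonneg _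
    rw [mem_closedBall_zero_iff]
    have h5 : ‖x‖ ^ 2 ≤ 1 := by nlinarith
    exact (pow_le_one_iff_of_nonneg (norm_nonneg x) two_ne_zero).mp h5
  have hB1sup : Metric.ball (0 : EuclideanSpace ℝ (Fin n)) (1 / (n:ℝ)) ⊆ B1 n := by
    intro x hx
    rw [mem_ball_zero_iff] at hx
    have hcoord : ∀ i, |x i| ≤ ‖x‖ := by
      intro i
      have h1 : (x i) ^ 2 ≤ ∑ j, (x j) ^ 2 :=
        Finset.single_le_sum (fun j _ => sq_nonneg (x j)) (Finset.mem_univ i)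
      have h2 : (x i) ^ 2 ≤ ‖x‖ ^ 2 := by rw [SSAux.norm_sq_eq]; exact h1
      calc |x i| = Real.sqrt ((x i) ^ 2) := (Real.sqrt_sq_eq_abs _).symm
        _ ≤ Real.sqrt (‖x‖ ^ 2) := Real.sqrt_le_sqrt h2
        _ = ‖x‖ := Real.sqrt_sq (norm_nonneg x)
    show ∑ i, |x i| ≤ 1
    calc ∑ i, |x i| ≤ ∑ _i : Fin n, ‖x‖ := Finset.sum_le_sum fun i _ => hcoord i
      _ = n * ‖x‖ := by rw [Finset.sum_const, Finset.card_univ, Fintype.card_fin, nsmul_eq_mul]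
      _ ≤ n * (1 / n) := by
          apply mul_le_mul_of_nonneg_left (le_of_lt hx) (le_of_lt hnR)
      _ = 1 := by field_simp
  have hv1fin : volume (B1 n) ≠ ⊤ := by
    have h1 : volume (B1 n)
        ≤ volume (Metric.closedBall (0 : EuclideanSpace ℝ (Fin n)) 1) := measure_mono hB1sub
    exact ne_top_of_le_ne_top measure_closedBall_lt_top.ne h1
  set v1 : ℝ := (volume (B1 n)).toReal with hv1def
  have hv1 : 0 < v1 := by
    apply ENNReal.toReal_pos _ hv1fin
    intro h0
    have hle : volume (Metric.ball (0 : EuclideanSpace ℝ (Fin n)) (1 / (n:ℝ)))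
        ≤ volume (B1 n) := measure_mono hB1sup
    rw [h0, nonpos_iff_eq_zero] at hle
    exact (Metric.measure_ball_pos volume (0 : EuclideanSpace ℝ (Fin n))
      (by positivity : (0:ℝ) < 1 / n)).ne' hle
  -- scales
  set c2 : ℝ := v2 ^ (1 / (n:ℝ)) with hc2def
  set c1 : ℝ := v1 ^ (1 / (n:ℝ)) with hc1def
  have hc2 : 0 < c2 := Real.rpow_pos_of_pos hv2 _
  have hc1 : 0 < c1 := Real.rpow_pos_of_pos hv1 _
  set R : ℝ := c2⁻¹ with hRdef
  have hR : 0 < R := inv_pos.mpr hc2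
  have hRn : R ^ n * v2 = 1 := by
    rw [hRdef, inv_pow, hc2def, ← Real.rpow_natCast (v2 ^ (1 / (n:ℝ))) n,
      ← Real.rpow_mul hv2.le, one_div, inv_mul_cancel₀ (ne_of_gt hnR), Real.rpow_one]
    field_simp
  have hRnval : R ^ n = G1 / p ^ n := by
    have h1 : R ^ n = 1 / v2 := by
      rw [eq_div_iff (ne_of_gt hv2)]
      exact hRn
    rw [h1, hv2R, one_div_div]
  -- positivity of t
  have hK : 0 < Real.sqrt (2 / π) + γ := by positivity
  have hthr : 0 < (Real.sqrt (2 / π) + γ) * Real.sqrt n * c1 / c2 := by positivity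
  have ht0 : 0 < t := lt_of_lt_of_le hthr ht
  set s : ℝ := t / c1 with hsdef
  have hs0 : 0 < s := by positivity
  -- set identities
  have hset2 : c2⁻¹ • B2 n = Metric.closedBall (0 : EuclideanSpace ℝ (Fin n)) R := by
    rw [B2, smul_unitClosedBall, Real.norm_eq_abs, abs_of_pos (inv_pos.mpr hc2)]
  have smul_B1 : ∀ c : ℝ, 0 < c →
      c • B1 n = {x : EuclideanSpace ℝ (Fin n) | ∑ i, |x i| ≤ c} := by
    intro c hc
    ext x
    rw [Set.mem_smul_set_iff_inv_smul_mem₀ (ne_of_gt hc)]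
    show (∑ i, |(c⁻¹ • x) i|) ≤ 1 ↔ _
    have e : ∀ i : Fin n, |(c⁻¹ • x) i| = c⁻¹ * |x i| := by
      intro i
      show |c⁻¹ * x i| = _
      rw [abs_mul, abs_of_pos (inv_pos.mpr hc)]
    rw [Finset.sum_congr rfl (fun i _ => e i), ← Finset.mul_sum, Set.mem_setOf_eq]
    rw [inv_mul_le_iff₀ hc, mul_one]
  have hset1 : t • (c1⁻¹ • B1 n) = {x : EuclideanSpace ℝ (Fin n) | ∑ i, |x i| ≤ s} := by
    rw [smul_smul, smul_B1 (t * c1⁻¹) (by positivity), hsdef, div_eq_mul_inv]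
  -- the sets
  set A : Set (EuclideanSpace ℝ (Fin n)) :=
    Metric.closedBall (0 : EuclideanSpace ℝ (Fin n)) R with hAdef
  set G : Set (EuclideanSpace ℝ (Fin n)) :=
    {x : EuclideanSpace ℝ (Fin n) | ∑ i, |x i| ≤ s} with hGdef
  have hGmeas : MeasurableSet G :=
    (isClosed_le (continuous_finset_sum _ (fun i _ => SSAux.cont_abs i))
      continuous_const).measurableSet
  have hgoalset : (((volume (B2 n)).toReal ^ (1 / (n : ℝ)))⁻¹ • B2 n) ∩
      t • (((volume (B1 n)).toReal ^ (1 / (n : ℝ)))⁻¹ • B1 n) = A ∩ G := by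
    rw [← hv2def, ← hv1def, ← hc2def, ← hc1def, hset2, hset1]
  rw [hgoalset]
  -- volume of A
  have hvolA : volume A = ENNReal.ofReal 1 := by
    rw [hAdef, EuclideanSpace.volume_closedBall, Fintype.card_fin,
      ← ENNReal.ofReal_pow hR.le, ← ENNReal.ofReal_mul (by positivity)]
    congr 1
    rw [← hpdef, ← hG1def, ← hv2R]
    exact hRn
  have hvolA1 : (volume A).toReal = 1 := by rw [hvolA, ENNReal.toReal_ofReal one_pos.le]
  have hAfin : volume A ≠ ⊤ := by rw [hvolA]; exact ENNReal.ofReal_ne_top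
  -- S and its integrals
  set S : EuclideanSpace ℝ (Fin n) → ℝ := fun x => ∑ i, |x i| with hSdef
  have hScont : Continuous S := continuous_finset_sum _ (fun i _ => SSAux.cont_abs i)
  have hShom : ∀ r : ℝ, 0 < r → ∀ x : EuclideanSpace ℝ (Fin n), S (r • x) = r ^ 1 * S x := by
    intro r hr x
    rw [pow_one, hSdef]
    show (∑ i, |(r • x) i|) = r * ∑ i, |x i|
    rw [Finset.mul_sum]
    refine Finset.sum_congr rfl fun i _ => ?_
    show |r * x i| = r * |x i|
    rw [abs_mul, abs_of_pos hr]
  have hS2hom : ∀ r : ℝ, 0 < r → ∀ x : EuclideanSpace ℝ (Fin n),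
      (S (r • x)) ^ 2 = r ^ 2 * (S x) ^ 2 := by
    intro r hr x
    rw [hShom r hr x]; ring
  -- base integrals
  have hIS : ∫ x in Metric.closedBall (0 : EuclideanSpace ℝ (Fin n)) 1, S x
      = (n : ℝ) * p ^ (n - 1) / G3 := by
    have := SSAux.intS hn1
    rw [eq_div_iff (ne_of_gt hG3)]
    exact this
  have hIS2 : ∫ x in Metric.closedBall (0 : EuclideanSpace ℝ (Fin n)) 1, (S x) ^ 2
      = ((n : ℝ) * ((p / 2) * p ^ (n - 1)) + (n : ℝ) * ((n : ℝ) - 1) * p ^ (n - 2)) / G2 := by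
    have := SSAux.intS2 hn1
    rw [eq_div_iff (ne_of_gt hG2)]
    exact this
  set m : ℝ := ∫ x in A, S x with hmdef
  have hSA : m = R ^ (n + 1) * ((n : ℝ) * p ^ (n - 1) / G3) := by
    rw [hmdef, hAdef, SSAux.scale_ball S 1 hShom hR, hIS]
  have hS2A : ∫ x in A, (S x) ^ 2 = R ^ (n + 2) *
      (((n : ℝ) * ((p / 2) * p ^ (n - 1)) + (n : ℝ) * ((n : ℝ) - 1) * p ^ (n - 2)) / G2) := by
    rw [hAdef, SSAux.scale_ball (fun x => (S x) ^ 2) 2 hS2hom hR, hIS2]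
  -- power identities
  have hpn1 : p ^ n = p ^ (n - 1) * p := by
    rw [← pow_succ]; congr 1; omega
  have hpn2 : p ^ n = p ^ (n - 2) * p ^ 2 := by
    rw [← pow_add]; congr 1; omega
  -- key1 : m ≤ √(2/π) √n R
  have hsqrt2n : Real.sqrt (2 / π) * Real.sqrt n * p = Real.sqrt (2 * n) := by
    rw [hpdef, ← Real.sqrt_mul (by positivity : (0:ℝ) ≤ 2 / π) (n:ℝ),
      ← Real.sqrt_mul (by positivity : (0:ℝ) ≤ 2 / π * (n:ℝ)) π]
    congr 1
    field_simp [Real.pi_ne_zero]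
  obtain ⟨q, hq, hqn2, hqn1, hqn⟩ : ∃ q : ℝ, 0 < q ∧ p ^ (n - 2) = q ∧
      p ^ (n - 1) = q * p ∧ p ^ n = q * p ^ 2 :=
    ⟨p ^ (n - 2), by positivity, rfl, by rw [← pow_succ]; congr 1; omega,
      by rw [← pow_add]; congr 1; omega⟩
  have hRnval' : R ^ n = G1 / (q * p ^ 2) := by rw [hRnval, hqn]
  have hm2 : m = R * (((n : ℝ) * G1) / (p * G3)) := by
    rw [hSA, pow_succ, hRnval', hqn1]
    field_simp
  have key1 : m ≤ Real.sqrt (2 / π) * Real.sqrt (n : ℝ) * R := by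
    rw [hm2]
    have h1 : ((n : ℝ) * G1) / (p * G3) ≤ Real.sqrt (2 / π) * Real.sqrt n := by
      rw [div_le_iff₀ (by positivity)]
      calc (n : ℝ) * G1 ≤ Real.sqrt (2 * n) * G3 := SSAux.gamma_ineq_iii hn1
        _ = Real.sqrt (2 / π) * Real.sqrt n * (p * G3) := by rw [← hsqrt2n]; ring
    calc R * (((n : ℝ) * G1) / (p * G3)) ≤ R * (Real.sqrt (2 / π) * Real.sqrt n) :=
          mul_le_mul_of_nonneg_left h1 hR.le
      _ = Real.sqrt (2 / π) * Real.sqrt (n : ℝ) * R := by ring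
  -- key2 : variance bound
  have key2 : (∫ x in A, (S x) ^ 2) - m ^ 2 ≤ R ^ 2 := by
    have e1 : ∫ x in A, (S x) ^ 2
        = R ^ 2 * ((n : ℝ) * G1 / (2 * G2) + (n : ℝ) * ((n : ℝ) - 1) * G1 / (p ^ 2 * G2)) := by
      rw [hS2A, pow_add, hRnval', hqn1, hqn2]
      field_simp
    have e2 : m ^ 2 = R ^ 2 * (((n : ℝ) * G1) ^ 2 / (p * G3) ^ 2) := by
      rw [hm2, mul_pow, div_pow]
    rw [e1, e2]
    have t1 : (n : ℝ) * G1 / (2 * G2) ≤ 1 := by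
      rw [SSAux.gamma_eq_i, div_le_one (by positivity)]
      exact mul_le_mul_of_nonneg_right (by linarith) hG1.le
    have hnn1 : (0:ℝ) ≤ (n:ℝ) - 1 := by linarith
    have t2 : (n : ℝ) * ((n : ℝ) - 1) * G1 / (p ^ 2 * G2) ≤ ((n : ℝ) * G1) ^ 2 / (p * G3) ^ 2 := by
      rw [div_le_div_iff₀ (by positivity) (by positivity)]
      have hii := SSAux.gamma_ineq_ii hn1
      have hw : (0:ℝ) ≤ (n:ℝ) * ((n:ℝ) - 1) * G1 * p ^ 2 :=
        mul_nonneg (mul_nonneg (mul_nonneg hnR.le hnn1) hG1.le) (sq_nonneg p)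
      have h4a : (0:ℝ) ≤ (n:ℝ) * G1 * p ^ 2 := by positivity
      have h4b := mul_le_mul_of_nonneg_left (show (n:ℝ) - 1 ≤ (n:ℝ) by linarith) h4a
      calc (n:ℝ) * ((n:ℝ) - 1) * G1 * (p * G3) ^ 2
          = ((n:ℝ) * ((n:ℝ) - 1) * G1 * p ^ 2) * G3 ^ 2 := by ring
        _ ≤ ((n:ℝ) * ((n:ℝ) - 1) * G1 * p ^ 2) * (G1 * G2) := mul_le_mul_of_nonneg_left hii hw
        _ = (((n:ℝ) * G1 * p ^ 2) * ((n:ℝ) - 1)) * (G1 * G2) := by ring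
        _ ≤ (((n:ℝ) * G1 * p ^ 2) * (n:ℝ)) * (G1 * G2) :=
            mul_le_mul_of_nonneg_right h4b (by positivity)
        _ = ((n:ℝ) * G1) ^ 2 * (p ^ 2 * G2) := by ring
    have hsum : ((n : ℝ) * G1 / (2 * G2) + (n : ℝ) * ((n : ℝ) - 1) * G1 / (p ^ 2 * G2))
        - ((n : ℝ) * G1) ^ 2 / (p * G3) ^ 2 ≤ 1 := by linarith
    calc R ^ 2 * ((n : ℝ) * G1 / (2 * G2) + (n : ℝ) * ((n : ℝ) - 1) * G1 / (p ^ 2 * G2))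
          - R ^ 2 * (((n : ℝ) * G1) ^ 2 / (p * G3) ^ 2)
        = R ^ 2 * (((n : ℝ) * G1 / (2 * G2) + (n : ℝ) * ((n : ℝ) - 1) * G1 / (p ^ 2 * G2))
            - ((n : ℝ) * G1) ^ 2 / (p * G3) ^ 2) := by ring
      _ ≤ R ^ 2 * 1 := mul_le_mul_of_nonneg_left hsum (sq_nonneg R)
      _ = R ^ 2 := mul_one _
  -- threshold bound for s
  have hsR : (Real.sqrt (2 / π) + γ) * Real.sqrt (n : ℝ) * R ≤ s := by
    have h1 : (Real.sqrt (2 / π) + γ) * Real.sqrt n * c1 / c2 / c1 ≤ t / c1 := by gcongr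
    have h2 : (Real.sqrt (2 / π) + γ) * Real.sqrt n * c1 / c2 / c1
        = (Real.sqrt (2 / π) + γ) * Real.sqrt (n:ℝ) * R := by
      rw [hRdef]
      field_simp
    rw [hsdef]
    rw [h2] at h1
    exact h1
  -- Chebyshev
  have hAmeas : MeasurableSet A := by rw [hAdef]; exact measurableSet_closedBall
  set W : Set (EuclideanSpace ℝ (Fin n)) := A \ G with hWdef
  have hWsub : W ⊆ A := diff_subset
  have hWmeas : MeasurableSet W := hAmeas.diff hGmeas
  have hWfin : volume W ≠ ⊤ := ne_top_of_le_ne_top hAfin (measure_mono hWsub)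
  set β : ℝ := γ * Real.sqrt (n : ℝ) * R with hβdef
  have hβ : 0 < β := by positivity
  have hlow : ∀ x ∈ W, β ≤ S x - m := by
    rintro x ⟨hxA, hxG⟩
    have hxs : s < S x := lt_of_not_ge hxG
    have hms : m + β ≤ s := by
      have h3 : m + β ≤ (Real.sqrt (2 / π) + γ) * Real.sqrt (n : ℝ) * R := by
        have hexpand : (Real.sqrt (2 / π) + γ) * Real.sqrt (n : ℝ) * R
            = Real.sqrt (2 / π) * Real.sqrt (n : ℝ) * R + γ * Real.sqrt (n : ℝ) * R := by ring
        rw [hβdef, hexpand]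
        linarith [key1]
      linarith
    linarith
  have hInt2 : IntegrableOn (fun x => (S x - m) ^ 2) A volume := by
    rw [hAdef]
    exact SSAux.integrableOn_ball (((hScont.sub continuous_const).pow 2)) R
  have cheb1 : (volume W).toReal * β ^ 2 ≤ ∫ x in W, (S x - m) ^ 2 := by
    calc (volume W).toReal * β ^ 2 = ∫ _x in W, β ^ 2 ∂volume := by
          rw [setIntegral_const, smul_eq_mul, measureReal_def]
      _ ≤ ∫ x in W, (S x - m) ^ 2 := by
          refine setIntegral_mono_on
            (integrableOn_const hWfin)
            (hInt2.mono_set hWsub) hWmeas (fun x hx => ?_)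
          exact pow_le_pow_left₀ hβ.le (hlow x hx) 2
  have cheb2 : ∫ x in W, (S x - m) ^ 2 ≤ ∫ x in A, (S x - m) ^ 2 :=
    setIntegral_mono_set hInt2 (Filter.Eventually.of_forall fun x => sq_nonneg _)
      (HasSubset.Subset.eventuallyLE hWsub)
  have hexp : ∫ x in A, (S x - m) ^ 2 = (∫ x in A, (S x) ^ 2) - m ^ 2 := by
    have e : ∀ x : EuclideanSpace ℝ (Fin n),
        (S x - m) ^ 2 = (S x) ^ 2 - (2 * m) * S x + m ^ 2 := fun x => by ring
    have i1 : IntegrableOn (fun x => (S x) ^ 2) A volume := by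
      rw [hAdef]; exact SSAux.integrableOn_ball (hScont.pow 2) R
    have i2 : IntegrableOn (fun x => (2 * m) * S x) A volume := by
      rw [hAdef]; exact (SSAux.integrableOn_ball hScont R).const_mul _
    have i3 : IntegrableOn (fun _x => m ^ 2) A volume :=
      integrableOn_const hAfin
    have hadd : (∫ x in A, (S x ^ 2 - (2 * m) * S x + m ^ 2) ∂volume)
        = (∫ x in A, (S x ^ 2 - (2 * m) * S x) ∂volume) + (∫ _x in A, m ^ 2 ∂volume) :=
      integral_add (i1.sub i2) i3
    have hsub : (∫ x in A, (S x ^ 2 - (2 * m) * S x) ∂volume)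
        = (∫ x in A, S x ^ 2 ∂volume) - (∫ x in A, (2 * m) * S x ∂volume) := integral_sub i1 i2
    rw [setIntegral_congr_fun hAmeas (fun x _ => e x), hadd, hsub, integral_const_mul,
      setIntegral_const, smul_eq_mul, measureReal_def, hvolA1, ← hmdef]
    ring
  have chebW : (volume W).toReal ≤ 1 / 2 := by
    have hβ2 : β ^ 2 = γ ^ 2 * (n : ℝ) * R ^ 2 := by
      rw [hβdef, mul_pow, mul_pow, Real.sq_sqrt hnR.le]
    have h1 : (volume W).toReal * (γ ^ 2 * (n : ℝ) * R ^ 2) ≤ R ^ 2 := by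
      rw [← hβ2]
      refine le_trans cheb1 (le_trans cheb2 ?_)
      rw [hexp]; exact key2
    have h2 : 2 < γ ^ 2 * (n : ℝ) := by
      rw [div_lt_iff₀ (by positivity)] at hnγ
      linarith
    have hR2 : 0 < R ^ 2 := by positivity
    have h3 : (volume W).toReal * (γ ^ 2 * (n : ℝ)) ≤ 1 := by
      have hh : ((volume W).toReal * (γ ^ 2 * (n : ℝ))) * R ^ 2 ≤ 1 * R ^ 2 := by
        calc ((volume W).toReal * (γ ^ 2 * (n : ℝ))) * R ^ 2
            = (volume W).toReal * (γ ^ 2 * (n : ℝ) * R ^ 2) := by ring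
          _ ≤ R ^ 2 := h1
          _ = 1 * R ^ 2 := by ring
      exact le_of_mul_le_mul_right hh hR2
    have h5 := mul_le_mul_of_nonneg_left h2.le (ENNReal.toReal_nonneg (a := volume W))
    linarith
  have hsplit : volume (A ∩ G) + volume W = volume A := measure_inter_add_diff A hGmeas
  have hIfin : volume (A ∩ G) ≠ ⊤ := ne_top_of_le_ne_top hAfin (measure_mono inter_subset_left)
  have htot : (volume (A ∩ G)).toReal + (volume W).toReal = 1 := by
    rw [← ENNReal.toReal_add hIfin hWfin, hsplit, hvolA1]
  constructor
  · linarith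
  · linarith [ENNReal.toReal_nonneg (a := volume W)]
end

section
/- For every γ > 0 there is n₀ such that for all n ≥ n₀ and all s with s ≥ ((√2 + γ)/√n) · vol_n(B₂ⁿ)^{1/n} / vol_n(B₁ⁿ)^{1/n}, one has 1/2 ≤ vol_n( (B₁ⁿ / vol_n(B₁ⁿ)^{1/n}) ∩ s · (B₂ⁿ / vol_n(B₂ⁿ)^{1/n}) ) ≤ 1. -/
open MeasureTheory Set Filter
open scoped Pointwise ENNReal Nat

noncomputable section

namespace CrossAux

/-- 1-D weight function. -/
def g1 (m : ℕ) (t : ℝ) : ℝ := t ^ (2*m) * Real.exp (-|t|)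

lemma g1_nonneg (m : ℕ) (t : ℝ) : 0 ≤ g1 m t := by
  unfold g1; rw [pow_mul]; positivity

lemma g1_continuous (m : ℕ) : Continuous (g1 m) := by
  unfold g1; fun_prop

lemma gamma_step (m : ℕ) :
    ∫⁻ r in Set.Ioi (0:ℝ), ENNReal.ofReal (Real.exp (-r) * r ^ m) = ENNReal.ofReal (m ! : ℝ) := by
  have hint : IntegrableOn (fun r : ℝ => Real.exp (-r) * r ^ m) (Set.Ioi 0) := by
    have h := Real.GammaIntegral_convergent (s := (m+1:ℝ)) (by positivity)
    refine h.congr_fun ?_ measurableSet_Ioi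
    intro x hx
    show Real.exp (-x) * x ^ ((m:ℝ)+1-1) = Real.exp (-x) * x ^ m
    rw [add_sub_cancel_right, Real.rpow_natCast]
  rw [← ofReal_integral_eq_lintegral_ofReal hint
      ((ae_restrict_iff' measurableSet_Ioi).2 (ae_of_all _ fun x hx =>
        mul_nonneg (Real.exp_nonneg _) (pow_nonneg (le_of_lt (Set.mem_Ioi.1 hx)) _)))]
  congr 1
  have h := Real.Gamma_eq_integral (s := (m+1:ℝ)) (by positivity)
  rw [Real.Gamma_nat_eq_factorial] at h
  have h2 : ∫ x in Set.Ioi (0:ℝ), Real.exp (-x) * x ^ ((m:ℝ)+1-1)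
      = ∫ x in Set.Ioi (0:ℝ), Real.exp (-x) * x ^ m := by
    refine setIntegral_congr_fun measurableSet_Ioi fun x hx => ?_
    rw [add_sub_cancel_right, Real.rpow_natCast]
  rw [← h2]
  exact h.symm

lemma lintegral_Ioi_g1 (m : ℕ) :
    ∫⁻ t in Set.Ioi (0:ℝ), ENNReal.ofReal (g1 m t) = ENNReal.ofReal ((2*m)! : ℝ) := by
  rw [← gamma_step (2*m)]
  refine setLIntegral_congr_fun measurableSet_Ioi (fun t ht => ?_)
  unfold g1
  rw [abs_of_pos (Set.mem_Ioi.1 ht), mul_comm]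

lemma lintegral_g1 (m : ℕ) :
    ∫⁻ t : ℝ, ENNReal.ofReal (g1 m t) = ENNReal.ofReal (2 * (2*m)! : ℝ) := by
  have heven : ∀ t : ℝ, g1 m (-t) = g1 m t := by
    intro t; unfold g1
    rw [abs_neg, Even.neg_pow ⟨m, by ring⟩]
  have hIio : ∫⁻ t in Set.Iio (0:ℝ), ENNReal.ofReal (g1 m t)
      = ENNReal.ofReal ((2*m)! : ℝ) := by
    have hneg : MeasurePreserving (fun t : ℝ => -t) volume volume :=
      Measure.measurePreserving_neg _
    have hemb : MeasurableEmbedding (fun t : ℝ => -t) :=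
      (Homeomorph.neg ℝ).measurableEmbedding
    have hpre : (fun t : ℝ => -t) ⁻¹' (Set.Iio 0) = Set.Ioi 0 := by
      ext t; simp
    have := hneg.setLIntegral_comp_preimage_emb hemb
      (fun t => ENNReal.ofReal (g1 m t)) (Set.Iio 0)
    rw [hpre] at this
    rw [← this, ← lintegral_Ioi_g1 m]
    refine setLIntegral_congr_fun measurableSet_Ioi (fun t ht => ?_)
    rw [heven]
  have hsplit := lintegral_add_compl (μ := volume) (fun t => ENNReal.ofReal (g1 m t))
    (measurableSet_Iio (a := (0:ℝ)))
  rw [compl_Iio, ← MeasureTheory.restrict_Ioi_eq_restrict_Ici] at hsplit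
  rw [← hsplit, hIio, lintegral_Ioi_g1, ← ENNReal.ofReal_add (by positivity) (by positivity)]
  congr 1; ring

lemma integrable_g1 (m : ℕ) : Integrable (g1 m) := by
  refine ⟨(g1_continuous m).aestronglyMeasurable, ?_⟩
  rw [hasFiniteIntegral_iff_ofReal (ae_of_all _ (g1_nonneg m))]
  rw [lintegral_g1]
  exact ENNReal.ofReal_lt_top

lemma integral_g1 (m : ℕ) : ∫ t, g1 m t = 2 * ((2*m)! : ℝ) := by
  have h := ofReal_integral_eq_lintegral_ofReal (integrable_g1 m) (ae_of_all _ (g1_nonneg m))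
  rw [lintegral_g1] at h
  have h1 : 0 ≤ ∫ t, g1 m t := integral_nonneg (g1_nonneg m)
  have h2 : (0:ℝ) ≤ 2 * ((2*m)! : ℝ) := by positivity
  exact (ENNReal.ofReal_eq_ofReal_iff h1 h2).1 h

lemma lintegral_prod_g1 {n : ℕ} (f : Fin n → ℕ) :
    ∫⁻ x : Fin n → ℝ, ENNReal.ofReal (∏ i, g1 (f i) (x i)) =
      ENNReal.ofReal (∏ i, (2 * ((2 * f i)! : ℝ))) := by
  rw [volume_pi]
  rw [← ofReal_integral_eq_lintegral_ofReal
      (Integrable.fin_nat_prod fun i => integrable_g1 (f i))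
      (ae_of_all _ fun x => Finset.prod_nonneg fun i _ => g1_nonneg _ _)]
  congr 1
  rw [MeasureTheory.integral_fin_nat_prod_eq_prod]
  exact Finset.prod_congr rfl fun i _ => integral_g1 (f i)


/-! ### pi space -/

def Npi {n : ℕ} (x : Fin n → ℝ) : ℝ := ∑ i, |x i|

def qpi {n : ℕ} (x : Fin n → ℝ) : ℝ := ∑ i, x i ^ 2

def Bpi (n : ℕ) : Set (Fin n → ℝ) := {x | Npi x ≤ 1}

lemma Npi_continuous {n : ℕ} : Continuous (Npi (n := n)) :=
  continuous_finset_sum _ fun i _ => (continuous_apply i).abs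

lemma qpi_continuous {n : ℕ} : Continuous (qpi (n := n)) :=
  continuous_finset_sum _ fun i _ => (continuous_apply i).pow 2

lemma Npi_nonneg {n : ℕ} (x : Fin n → ℝ) : 0 ≤ Npi x :=
  Finset.sum_nonneg fun i _ => abs_nonneg _

lemma qpi_nonneg {n : ℕ} (x : Fin n → ℝ) : 0 ≤ qpi x :=
  Finset.sum_nonneg fun i _ => sq_nonneg _

lemma Npi_smul {n : ℕ} (c : ℝ) (x : Fin n → ℝ) : Npi (c • x) = |c| * Npi x := by
  unfold Npi
  rw [Finset.mul_sum]
  refine Finset.sum_congr rfl fun i _ => ?_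
  simp [abs_mul]

lemma qpi_smul {n : ℕ} (c : ℝ) (x : Fin n → ℝ) : qpi (c • x) = c ^ 2 * qpi x := by
  unfold qpi
  rw [Finset.mul_sum]
  refine Finset.sum_congr rfl fun i _ => ?_
  simp [mul_pow]

lemma measurableSet_Bpi {n : ℕ} : MeasurableSet (Bpi n) :=
  measurableSet_le Npi_continuous.measurable measurable_const

lemma sublevel_eq_smul {n : ℕ} {r : ℝ} (hr : 0 < r) :
    {x : Fin n → ℝ | Npi x ≤ r} = r • Bpi n := by
  ext x
  rw [Set.mem_smul_set_iff_inv_smul_mem₀ hr.ne']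
  simp only [Set.mem_setOf_eq, Bpi, Npi_smul, abs_of_pos (inv_pos.2 hr)]
  rw [inv_mul_le_iff₀ hr, mul_one]

lemma lintegral_comp_smul {n : ℕ} (f : (Fin n → ℝ) → ℝ≥0∞) (hf : Measurable f)
    {r : ℝ} (hr : 0 < r) :
    ∫⁻ x, f (r • x) = ENNReal.ofReal ((r ^ n)⁻¹) * ∫⁻ x, f x := by
  have h := Measure.map_addHaar_smul (μ := (volume : Measure (Fin n → ℝ))) hr.ne'
  have h2 : ∫⁻ x, f (r • x) = ∫⁻ x, f x ∂(Measure.map (r • ·) volume) :=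
    (lintegral_map hf (measurable_const_smul r)).symm
  rw [h2, h, lintegral_smul_measure]
  congr 2
  rw [Module.finrank_fin_fun, abs_of_nonneg (by positivity)]

lemma setLIntegral_sublevel {n : ℕ} (g : (Fin n → ℝ) → ℝ≥0∞) (hg : Measurable g)
    (d : ℕ) (hom : ∀ ⦃c : ℝ⦄, 0 < c → ∀ x, g (c • x) = ENNReal.ofReal (c ^ d) * g x)
    {r : ℝ} (hr : 0 < r) :
    ∫⁻ x in {x : Fin n → ℝ | Npi x ≤ r}, g x
      = ENNReal.ofReal (r ^ (n + d)) * ∫⁻ x in Bpi n, g x := by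
  have hrec : MeasurableSet {x : Fin n → ℝ | Npi x ≤ r} :=
    measurableSet_le Npi_continuous.measurable measurable_const
  set F := ({x : Fin n → ℝ | Npi x ≤ r}).indicator g with hF
  have hFmeas : Measurable F := hg.indicator hrec
  have key : ∀ x, F (r • x) = ENNReal.ofReal (r ^ d) * (Bpi n).indicator g x := by
    intro x
    by_cases h : Npi x ≤ 1
    · have h1 : Npi (r • x) ≤ r := by
        rw [Npi_smul, abs_of_pos hr]
        nlinarith [Npi_nonneg x]
      rw [hF, Set.indicator_of_mem (show r • x ∈ {x : Fin n → ℝ | Npi x ≤ r} from h1),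
        Set.indicator_of_mem (show x ∈ Bpi n from h), hom hr]
    · have h1 : ¬ Npi (r • x) ≤ r := by
        rw [Npi_smul, abs_of_pos hr]
        intro hc
        exact h (by nlinarith)
      rw [hF, Set.indicator_of_notMem (show r • x ∉ {x : Fin n → ℝ | Npi x ≤ r} from h1),
        Set.indicator_of_notMem (show x ∉ Bpi n from h), mul_zero]
  have hsc := lintegral_comp_smul F hFmeas hr
  simp only [key] at hsc
  rw [lintegral_const_mul _ (hg.indicator measurableSet_Bpi)] at hsc
  rw [lintegral_indicator measurableSet_Bpi] at hsc
  simp only [hF] at hsc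
  rw [lintegral_indicator hrec] at hsc
  set S := ∫⁻ x in {x : Fin n → ℝ | Npi x ≤ r}, g x
  set C := ∫⁻ x in Bpi n, g x
  calc S = ENNReal.ofReal (r ^ n) * (ENNReal.ofReal ((r ^ n)⁻¹) * S) := by
        rw [← mul_assoc, ← ENNReal.ofReal_mul (by positivity),
          mul_inv_cancel₀ (by positivity), ENNReal.ofReal_one, one_mul]
    _ = ENNReal.ofReal (r ^ n) * (ENNReal.ofReal (r ^ d) * C) := by rw [← hsc]
    _ = ENNReal.ofReal (r ^ (n + d)) * C := by
        rw [← mul_assoc, ← ENNReal.ofReal_mul (by positivity), ← pow_add]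


lemma exp_tail (s : ℝ) (hs : 0 ≤ s) :
    ∫⁻ r in Set.Ioi (0:ℝ), (Set.Ici s).indicator (fun r => ENNReal.ofReal (Real.exp (-r))) r
      = ENNReal.ofReal (Real.exp (-s)) := by
  have htail : ∀ u : ℝ, 0 ≤ u → ∫⁻ r in Set.Ioi u, ENNReal.ofReal (Real.exp (-r))
      = ENNReal.ofReal (Real.exp (-u)) := by
    intro u hu
    have hint : IntegrableOn (fun r : ℝ => Real.exp (-r)) (Set.Ioi u) := by
      have := exp_neg_integrableOn_Ioi u (one_pos (α := ℝ))
      refine this.congr_fun (fun x hx => by dsimp only; rw [neg_one_mul]) measurableSet_Ioi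
    rw [← ofReal_integral_eq_lintegral_ofReal hint
        (ae_of_all _ fun x => Real.exp_nonneg _), integral_exp_neg_Ioi]
  rw [lintegral_indicator measurableSet_Ici, Measure.restrict_restrict measurableSet_Ici]
  rcases eq_or_lt_of_le hs with h0 | h0
  · rw [show Set.Ici s ∩ Set.Ioi 0 = Set.Ioi 0 by
      rw [Set.inter_eq_right]; intro x hx; exact le_of_lt (show s < x from h0 ▸ hx)]
    rw [htail 0 le_rfl, ← h0]
  · rw [show Set.Ici s ∩ Set.Ioi 0 = Set.Ici s by
      rw [Set.inter_eq_left]; intro x hx; exact lt_of_lt_of_le h0 hx]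
    rw [← MeasureTheory.restrict_Ioi_eq_restrict_Ici, htail s hs]

lemma layer_cake {n : ℕ} (g : (Fin n → ℝ) → ℝ≥0∞) (hg : Measurable g) (hfin : ∀ x, g x ≠ ∞)
    (d : ℕ) (hom : ∀ ⦃c : ℝ⦄, 0 < c → ∀ x, g (c • x) = ENNReal.ofReal (c ^ d) * g x) :
    ∫⁻ x, g x * ENNReal.ofReal (Real.exp (-Npi x))
      = ENNReal.ofReal (((n + d)! : ℕ) : ℝ) * ∫⁻ x in Bpi n, g x := by
  set C := ∫⁻ x in Bpi n, g x with hC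
  have hS : MeasurableSet {p : (Fin n → ℝ) × ℝ | Npi p.1 ≤ p.2} :=
    measurableSet_le (Npi_continuous.measurable.comp measurable_fst) measurable_snd
  set Φ : (Fin n → ℝ) × ℝ → ℝ≥0∞ := fun p =>
    g p.1 * ({p : (Fin n → ℝ) × ℝ | Npi p.1 ≤ p.2}.indicator
      (fun p => ENNReal.ofReal (Real.exp (-p.2))) p) with hΦ
  have hΦmeas : Measurable Φ :=
    (hg.comp measurable_fst).mul
      ((ENNReal.measurable_ofReal.comp
        ((Real.continuous_exp.measurable).comp measurable_snd.neg)).indicator hS)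
  have hpt : ∀ x r, Φ (x, r)
      = g x * (Set.Ici (Npi x)).indicator (fun r => ENNReal.ofReal (Real.exp (-r))) r := by
    intro x r
    simp only [hΦ, Set.indicator_apply, Set.mem_setOf_eq, Set.mem_Ici]
  calc ∫⁻ x, g x * ENNReal.ofReal (Real.exp (-Npi x))
      = ∫⁻ x, ∫⁻ r in Set.Ioi (0:ℝ), Φ (x, r) := by
        refine lintegral_congr fun x => ?_
        simp only [hpt]
        rw [lintegral_const_mul' _ _ (hfin x), exp_tail (Npi x) (Npi_nonneg x)]
    _ = ∫⁻ r in Set.Ioi (0:ℝ), ∫⁻ x, Φ (x, r) := by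
        exact lintegral_lintegral_swap hΦmeas.aemeasurable
    _ = ∫⁻ r in Set.Ioi (0:ℝ), ENNReal.ofReal (Real.exp (-r) * r ^ (n + d)) * C := by
        refine setLIntegral_congr_fun measurableSet_Ioi (fun r hr => ?_)
        have hr0 : (0:ℝ) < r := hr
        have hpt2 : ∀ x, Φ (x, r)
            = ENNReal.ofReal (Real.exp (-r)) * ({x : Fin n → ℝ | Npi x ≤ r}.indicator g x) := by
          intro x
          rw [hpt]
          by_cases h : Npi x ≤ r
          · rw [Set.indicator_of_mem (Set.mem_Ici.2 h),
              Set.indicator_of_mem (show x ∈ {x : Fin n → ℝ | Npi x ≤ r} from h), mul_comm]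
          · rw [Set.indicator_of_notMem (fun hc => h (Set.mem_Ici.1 hc)),
              Set.indicator_of_notMem (show x ∉ {x : Fin n → ℝ | Npi x ≤ r} from h),
              mul_zero, mul_zero]
        simp only [hpt2]
        rw [lintegral_const_mul _ (hg.indicator
          (measurableSet_le Npi_continuous.measurable measurable_const)),
          lintegral_indicator (measurableSet_le Npi_continuous.measurable measurable_const),
          setLIntegral_sublevel g hg d hom hr0,
          ENNReal.ofReal_mul (Real.exp_nonneg _), mul_assoc]
    _ = ENNReal.ofReal (((n + d)! : ℕ) : ℝ) * C := by
        rw [lintegral_mul_const _ (by fun_prop), gamma_step (n + d), mul_comm]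


lemma prod_ite_one {n : ℕ} (i : Fin n) (a b : ℝ) :
    ∏ j : Fin n, (if j = i then a else b) = a * b ^ (n - 1) := by
  rw [← Finset.mul_prod_erase Finset.univ _ (Finset.mem_univ i), if_pos rfl]
  congr 1
  rw [Finset.prod_congr rfl (fun j hj => if_neg (Finset.ne_of_mem_erase hj)),
    Finset.prod_const, Finset.card_erase_of_mem (Finset.mem_univ i), Finset.card_univ,
    Fintype.card_fin]

lemma prod_ite_two {n : ℕ} {i j : Fin n} (hij : j ≠ i) (a b : ℝ) :
    ∏ k : Fin n, (if k = i then a else if k = j then a else b) = a ^ 2 * b ^ (n - 2) := by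
  rw [← Finset.mul_prod_erase Finset.univ _ (Finset.mem_univ i), if_pos rfl]
  rw [← Finset.mul_prod_erase (Finset.univ.erase i) _
    (Finset.mem_erase.2 ⟨hij, Finset.mem_univ j⟩), if_neg hij, if_pos rfl]
  have hcard : ((Finset.univ.erase i).erase j).card = n - 2 := by
    rw [Finset.card_erase_of_mem (Finset.mem_erase.2 ⟨hij, Finset.mem_univ j⟩),
      Finset.card_erase_of_mem (Finset.mem_univ i), Finset.card_univ, Fintype.card_fin]
    omega
  have hrest : ∏ k ∈ (Finset.univ.erase i).erase j,
      (if k = i then a else if k = j then a else b)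
      = ∏ k ∈ (Finset.univ.erase i).erase j, b := by
    refine Finset.prod_congr rfl fun k hk => ?_
    have hk1 : k ≠ j := Finset.ne_of_mem_erase hk
    have hk2 : k ≠ i := Finset.ne_of_mem_erase (Finset.mem_of_mem_erase hk)
    rw [if_neg hk2, if_neg hk1]
  rw [hrest, Finset.prod_const, hcard]
  ring

lemma exp_neg_Npi_eq_prod {n : ℕ} (x : Fin n → ℝ) :
    Real.exp (-Npi x) = ∏ i, Real.exp (-|x i|) := by
  unfold Npi
  rw [← Finset.sum_neg_distrib, Real.exp_sum]

lemma meas_prod_g1 {n : ℕ} (f : Fin n → ℕ) :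
    Measurable fun x : Fin n → ℝ => ENNReal.ofReal (∏ j, g1 (f j) (x j)) :=
  Measurable.ennreal_ofReal (Finset.measurable_prod _ fun j _ =>
    ((g1_continuous (f j)).measurable).comp (measurable_pi_apply j))

lemma moment0 (n : ℕ) :
    ENNReal.ofReal ((n ! : ℕ) : ℝ) * volume (Bpi n) = ENNReal.ofReal ((2:ℝ) ^ n) := by
  have h := layer_cake (n := n) (fun _ => (1:ℝ≥0∞)) measurable_const (fun _ => ENNReal.one_ne_top)
    0 (fun c hc x => by rw [pow_zero, ENNReal.ofReal_one, mul_one])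
  simp only [one_mul, Nat.add_zero] at h
  rw [setLIntegral_one] at h
  rw [← h]
  have hpt : ∀ x : Fin n → ℝ, ENNReal.ofReal (Real.exp (-Npi x))
      = ENNReal.ofReal (∏ i, g1 0 (x i)) := by
    intro x
    congr 1
    rw [exp_neg_Npi_eq_prod]
    exact Finset.prod_congr rfl fun i _ => by rw [g1, Nat.mul_zero, pow_zero, one_mul]
  simp only [hpt]
  rw [lintegral_prod_g1]
  congr 1
  simp [Finset.prod_const]

lemma moment1 {n : ℕ} (hn : 1 ≤ n) :
    ENNReal.ofReal (((n+2)! : ℕ) : ℝ) * ∫⁻ x in Bpi n, ENNReal.ofReal (qpi x)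
      = ENNReal.ofReal ((2:ℝ) ^ n * (2 * n)) := by
  have hmeas : Measurable fun x : Fin n → ℝ => ENNReal.ofReal (qpi x) :=
    qpi_continuous.measurable.ennreal_ofReal
  have h := layer_cake (fun x => ENNReal.ofReal (qpi x)) hmeas (fun x => ENNReal.ofReal_ne_top) 2
    (fun c hc x => by
      show ENNReal.ofReal (qpi (c • x)) = _
      rw [qpi_smul, ENNReal.ofReal_mul (sq_nonneg c)])
  rw [← h]
  have hpt : ∀ x : Fin n → ℝ, ENNReal.ofReal (qpi x) * ENNReal.ofReal (Real.exp (-Npi x))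
      = ∑ i, ENNReal.ofReal (∏ j, g1 (if j = i then 1 else 0) (x j)) := by
    intro x
    rw [← ENNReal.ofReal_mul (qpi_nonneg x)]
    rw [show qpi x * Real.exp (-Npi x) = ∑ i, x i ^ 2 * Real.exp (-Npi x) by
      rw [qpi, Finset.sum_mul]]
    rw [ENNReal.ofReal_sum_of_nonneg (fun i _ => by positivity)]
    refine Finset.sum_congr rfl fun i _ => ?_
    congr 1
    have e1 : ∀ j, g1 (if j = i then 1 else 0) (x j)
        = (if j = i then x j ^ 2 else 1) * Real.exp (-|x j|) := fun j => by
      unfold g1; split <;> simp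
    rw [exp_neg_Npi_eq_prod]
    simp only [e1]
    rw [Finset.prod_mul_distrib, Finset.prod_ite_eq' Finset.univ i (fun j => x j ^ 2)]
    simp
  simp only [hpt]
  rw [lintegral_finset_sum _ (fun i _ => meas_prod_g1 _)]
  have hval : ∀ i : Fin n, ∫⁻ x : Fin n → ℝ,
      ENNReal.ofReal (∏ j, g1 (if j = i then 1 else 0) (x j))
      = ENNReal.ofReal ((4:ℝ) * 2 ^ (n-1)) := by
    intro i
    rw [lintegral_prod_g1]
    congr 1
    calc ∏ j : Fin n, (2 * ((2 * (if j = i then 1 else 0))! : ℕ) : ℝ)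
        = ∏ j : Fin n, (if j = i then (4:ℝ) else 2) :=
          Finset.prod_congr rfl fun j _ => by split <;> norm_num [Nat.factorial]
      _ = 4 * 2 ^ (n-1) := prod_ite_one i 4 2
  simp only [hval]
  rw [Finset.sum_const, Finset.card_univ, Fintype.card_fin, nsmul_eq_mul,
    ← ENNReal.ofReal_natCast n, ← ENNReal.ofReal_mul (by positivity)]
  congr 1
  obtain ⟨m, rfl⟩ : ∃ m, n = m + 1 := ⟨n - 1, by omega⟩
  simp only [Nat.add_sub_cancel]
  push_cast
  ring

lemma moment2 {n : ℕ} (hn : 2 ≤ n) :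
    ENNReal.ofReal (((n+4)! : ℕ) : ℝ) * ∫⁻ x in Bpi n, ENNReal.ofReal (qpi x ^ 2)
      = ENNReal.ofReal ((2:ℝ) ^ n * (4 * n * (n + 5))) := by
  have hmeas : Measurable fun x : Fin n → ℝ => ENNReal.ofReal (qpi x ^ 2) :=
    (qpi_continuous.pow 2).measurable.ennreal_ofReal
  have h := layer_cake (fun x => ENNReal.ofReal (qpi x ^ 2)) hmeas
    (fun x => ENNReal.ofReal_ne_top) 4
    (fun c hc x => by
      show ENNReal.ofReal (qpi (c • x) ^ 2) = _
      rw [qpi_smul, mul_pow, ← pow_mul]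
      rw [ENNReal.ofReal_mul (by positivity)])
  rw [← h]
  have hpt : ∀ x : Fin n → ℝ, ENNReal.ofReal (qpi x ^ 2) * ENNReal.ofReal (Real.exp (-Npi x))
      = ∑ i, ∑ j, ENNReal.ofReal
          (∏ k, g1 ((if k = i then 1 else 0) + (if k = j then 1 else 0)) (x k)) := by
    intro x
    rw [← ENNReal.ofReal_mul (by positivity)]
    rw [show qpi x ^ 2 * Real.exp (-Npi x)
        = ∑ i, ∑ j, x i ^ 2 * x j ^ 2 * Real.exp (-Npi x) by
      rw [qpi, sq, Finset.sum_mul_sum, Finset.sum_mul]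
      refine Finset.sum_congr rfl fun i _ => ?_
      rw [Finset.sum_mul]]
    rw [ENNReal.ofReal_sum_of_nonneg (fun i _ => Finset.sum_nonneg fun j _ => by positivity)]
    refine Finset.sum_congr rfl fun i _ => ?_
    rw [ENNReal.ofReal_sum_of_nonneg (fun j _ => by positivity)]
    refine Finset.sum_congr rfl fun j _ => ?_
    congr 1
    have e1 : ∀ k, g1 ((if k = i then 1 else 0) + (if k = j then 1 else 0)) (x k)
        = ((if k = i then x k ^ 2 else 1) * (if k = j then x k ^ 2 else 1))
            * Real.exp (-|x k|) := fun k => by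
      unfold g1
      rw [Nat.mul_add, pow_add]
      congr 2 <;> split <;> simp
    rw [exp_neg_Npi_eq_prod]
    simp only [e1]
    rw [Finset.prod_mul_distrib, Finset.prod_mul_distrib,
      Finset.prod_ite_eq' Finset.univ i (fun k => x k ^ 2),
      Finset.prod_ite_eq' Finset.univ j (fun k => x k ^ 2)]
    simp [mul_assoc, mul_comm, mul_left_comm]
  simp only [hpt]
  rw [lintegral_finset_sum _
    (fun i _ => Finset.measurable_sum _ (fun j _ => meas_prod_g1 _))]
  have hval : ∀ i : Fin n, ∫⁻ x : Fin n → ℝ, ∑ j, ENNReal.ofReal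
        (∏ k, g1 ((if k = i then 1 else 0) + (if k = j then 1 else 0)) (x k))
      = ENNReal.ofReal ((48:ℝ) * 2 ^ (n-1))
        + ((n - 1 : ℕ) : ℝ≥0∞) * ENNReal.ofReal ((16:ℝ) * 2 ^ (n-2)) := by
    intro i
    rw [lintegral_finset_sum _ (fun j _ => meas_prod_g1 _)]
    have hterm : ∀ j : Fin n, ∫⁻ x : Fin n → ℝ, ENNReal.ofReal
          (∏ k, g1 ((if k = i then 1 else 0) + (if k = j then 1 else 0)) (x k))
        = if j = i then ENNReal.ofReal ((48:ℝ) * 2 ^ (n-1))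
          else ENNReal.ofReal ((16:ℝ) * 2 ^ (n-2)) := by
      intro j
      rw [lintegral_prod_g1]
      by_cases hij : j = i
      · subst hij
        rw [if_pos rfl]
        congr 1
        calc ∏ k : Fin n, (2 * ((2 * ((if k = j then 1 else 0) + (if k = j then 1 else 0)))! : ℕ) : ℝ)
            = ∏ k : Fin n, (if k = j then (48:ℝ) else 2) :=
              Finset.prod_congr rfl fun k _ => by split <;> norm_num [Nat.factorial]
          _ = 48 * 2 ^ (n-1) := prod_ite_one j 48 2
      · rw [if_neg hij]
        congr 1
        calc ∏ k : Fin n, (2 * ((2 * ((if k = i then 1 else 0) + (if k = j then 1 else 0)))! : ℕ) : ℝ)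
            = ∏ k : Fin n, (if k = i then (4:ℝ) else if k = j then 4 else 2) := by
              refine Finset.prod_congr rfl fun k _ => ?_
              by_cases h1 : k = i
              · have hkj : k ≠ j := by
                  rw [h1]; exact fun hc => hij hc.symm
                rw [if_pos h1, if_pos h1, if_neg hkj]
                norm_num [Nat.factorial]
              · rw [if_neg h1, if_neg h1]
                by_cases h2 : k = j
                · rw [if_pos h2, if_pos h2]
                  norm_num [Nat.factorial]
                · rw [if_neg h2, if_neg h2]
                  norm_num [Nat.factorial]
          _ = 4 ^ 2 * 2 ^ (n-2) := prod_ite_two hij 4 2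
          _ = 16 * 2 ^ (n-2) := by norm_num
    simp only [hterm]
    rw [← Finset.add_sum_erase _ _ (Finset.mem_univ i), if_pos rfl]
    congr 1
    have : ∀ j ∈ Finset.univ.erase i,
        (if j = i then ENNReal.ofReal ((48:ℝ) * 2 ^ (n-1))
          else ENNReal.ofReal ((16:ℝ) * 2 ^ (n-2))) = ENNReal.ofReal ((16:ℝ) * 2 ^ (n-2)) :=
      fun j hj => if_neg (Finset.ne_of_mem_erase hj)
    rw [Finset.sum_congr rfl this, Finset.sum_const,
      Finset.card_erase_of_mem (Finset.mem_univ i), Finset.card_univ, Fintype.card_fin,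
      nsmul_eq_mul]
  simp only [hval]
  rw [Finset.sum_const, Finset.card_univ, Fintype.card_fin, nsmul_eq_mul]
  obtain ⟨m, rfl⟩ : ∃ m, n = m + 2 := ⟨n - 2, by omega⟩
  have h1 : m + 2 - 1 = m + 1 := by omega
  have h2 : m + 2 - 2 = m := by omega
  rw [h1, h2, ← ENNReal.ofReal_natCast (m+2), ← ENNReal.ofReal_natCast (m+1),
    ← ENNReal.ofReal_mul (by positivity), ← ENNReal.ofReal_add (by positivity) (by positivity),
    ← ENNReal.ofReal_mul (by positivity)]
  congr 1
  push_cast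
  ring


set_option maxHeartbeats 2000000 in
lemma chebyshev_pi {n : ℕ} (hn : 2 ≤ n) {γ : ℝ} (hγ : 0 < γ) {a : ℝ}
    (ha : 2 / (n:ℝ) ≤ a) (haγ : 8 * γ^2 / (n:ℝ)^2 ≤ (a - 2/(n:ℝ))^2)
    (hbig : 86 / γ^2 ≤ (n:ℝ)) :
    2 * volume {y : Fin n → ℝ | Npi y ≤ 1 ∧ a ≤ qpi y} ≤ volume (Bpi n) := by
  set x : ℝ := (n:ℝ) with hxdef
  have hx : (2:ℝ) ≤ x := by rw [hxdef]; exact_mod_cast hn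
  have hx0 : (0:ℝ) < x := by linarith
  set μ' : ℝ := 2 / x with hμ'
  have hμ'0 : 0 ≤ μ' := by positivity
  set K := {y : Fin n → ℝ | Npi y ≤ 1 ∧ a ≤ qpi y} with hK
  have hKmeas : MeasurableSet K :=
    (measurableSet_le Npi_continuous.measurable measurable_const).inter
      (measurableSet_le measurable_const qpi_continuous.measurable)
  have hKB : K ⊆ Bpi n := fun y hy => hy.1
  have hqmeas : Measurable fun y : Fin n → ℝ => ENNReal.ofReal (qpi y) :=
    qpi_continuous.measurable.ennreal_ofReal
  have hq2meas : Measurable fun y : Fin n → ℝ => ENNReal.ofReal (qpi y ^ 2) :=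
    (qpi_continuous.pow 2).measurable.ennreal_ofReal
  have hvarmeas : Measurable fun y : Fin n → ℝ => ENNReal.ofReal ((qpi y - μ')^2) :=
    ((qpi_continuous.sub continuous_const).pow 2).measurable.ennreal_ofReal
  set V := volume (Bpi n) with hVdef
  set C1 := ∫⁻ y in Bpi n, ENNReal.ofReal (qpi y) with hC1def
  set C2 := ∫⁻ y in Bpi n, ENNReal.ofReal (qpi y ^ 2) with hC2def
  set Y := ∫⁻ y in Bpi n, ENNReal.ofReal ((qpi y - μ')^2) with hYdef
  -- values
  have hfac0 : (0:ℝ) < ((n)! : ℕ) := by exact_mod_cast Nat.factorial_pos n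
  have hfac2 : (0:ℝ) < ((n+2)! : ℕ) := by exact_mod_cast Nat.factorial_pos (n+2)
  have hfac4 : (0:ℝ) < ((n+4)! : ℕ) := by exact_mod_cast Nat.factorial_pos (n+4)
  have hVval : V = ENNReal.ofReal ((2:ℝ)^n) / ENNReal.ofReal ((n ! : ℕ) : ℝ) :=
    (ENNReal.eq_div_iff (ne_of_gt (ENNReal.ofReal_pos.2 hfac0))
      ENNReal.ofReal_ne_top).2 (moment0 n)
  have hC1val : C1 = ENNReal.ofReal ((2:ℝ)^n * (2*n)) / ENNReal.ofReal (((n+2)! : ℕ) : ℝ) :=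
    (ENNReal.eq_div_iff (ne_of_gt (ENNReal.ofReal_pos.2 hfac2))
      ENNReal.ofReal_ne_top).2 (moment1 (by omega))
  have hC2val : C2 = ENNReal.ofReal ((2:ℝ)^n * (4*n*(n+5))) / ENNReal.ofReal (((n+4)! : ℕ) : ℝ) :=
    (ENNReal.eq_div_iff (ne_of_gt (ENNReal.ofReal_pos.2 hfac4))
      ENNReal.ofReal_ne_top).2 (moment2 hn)
  have hVtop : V ≠ ∞ := by
    rw [hVval]; exact (ENNReal.div_lt_top ENNReal.ofReal_ne_top
      (ne_of_gt (ENNReal.ofReal_pos.2 hfac0))).ne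
  have hC1top : C1 ≠ ∞ := by
    rw [hC1val]; exact (ENNReal.div_lt_top ENNReal.ofReal_ne_top
      (ne_of_gt (ENNReal.ofReal_pos.2 hfac2))).ne
  have hC2top : C2 ≠ ∞ := by
    rw [hC2val]; exact (ENNReal.div_lt_top ENNReal.ofReal_ne_top
      (ne_of_gt (ENNReal.ofReal_pos.2 hfac4))).ne
  have hKtop : volume K ≠ ∞ :=
    (lt_of_le_of_lt (measure_mono hKB) (lt_of_le_of_ne le_top hVtop)).ne
  -- Chebyshev
  have step1 : volume K * ENNReal.ofReal ((a - μ')^2) ≤ Y := by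
    calc volume K * ENNReal.ofReal ((a - μ')^2)
        = ENNReal.ofReal ((a - μ')^2) * volume K := mul_comm _ _
      _ = ∫⁻ y in K, ENNReal.ofReal ((a - μ')^2) := (setLIntegral_const _ _).symm
      _ ≤ ∫⁻ y in K, ENNReal.ofReal ((qpi y - μ')^2) := by
          refine setLIntegral_mono hvarmeas fun y hy => ?_
          refine ENNReal.ofReal_le_ofReal ?_
          have h1 : a ≤ qpi y := hy.2
          have h2 : 0 ≤ a - μ' := sub_nonneg.2 ha
          exact pow_le_pow_left₀ h2 (by linarith) 2
      _ ≤ Y := lintegral_mono_set hKB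
  have step2 : Y + ENNReal.ofReal (2*μ') * C1 = C2 + ENNReal.ofReal (μ'^2) * V := by
    have e : ∀ y : Fin n → ℝ, ENNReal.ofReal ((qpi y - μ')^2)
        + ENNReal.ofReal (2*μ') * ENNReal.ofReal (qpi y)
        = ENNReal.ofReal (qpi y ^ 2) + ENNReal.ofReal (μ'^2) := by
      intro y
      rw [← ENNReal.ofReal_mul (by linarith : (0:ℝ) ≤ 2*μ'),
        ← ENNReal.ofReal_add (sq_nonneg _) (mul_nonneg (by linarith : (0:ℝ) ≤ 2*μ') (qpi_nonneg y)),
        ← ENNReal.ofReal_add (sq_nonneg _) (sq_nonneg μ')]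
      congr 1
      ring
    calc Y + ENNReal.ofReal (2*μ') * C1
        = ∫⁻ y in Bpi n, (ENNReal.ofReal ((qpi y - μ')^2)
            + ENNReal.ofReal (2*μ') * ENNReal.ofReal (qpi y)) := by
          rw [lintegral_add_left hvarmeas, lintegral_const_mul _ hqmeas]
      _ = ∫⁻ y in Bpi n, (ENNReal.ofReal (qpi y ^ 2) + ENNReal.ofReal (μ'^2)) :=
          lintegral_congr fun y => e y
      _ = C2 + ENNReal.ofReal (μ'^2) * V := by
          rw [lintegral_add_right _ measurable_const, setLIntegral_const]
  have hYtop : Y ≠ ∞ := by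
    have h1 : Y ≤ C2 + ENNReal.ofReal (μ'^2) * V := step2 ▸ le_self_add
    exact (lt_of_le_of_lt h1 (lt_of_le_of_ne le_top (by
      exact (ENNReal.add_ne_top.2 ⟨hC2top, ENNReal.mul_ne_top ENNReal.ofReal_ne_top hVtop⟩).symm ∘ Eq.symm))).ne
  -- real versions
  set vK := (volume K).toReal with hvK
  set Vr := V.toReal with hVr
  set C1r := C1.toReal with hC1r
  set C2r := C2.toReal with hC2r
  set Yr := Y.toReal with hYr
  have hvK0 : 0 ≤ vK := ENNReal.toReal_nonneg
  have hVr0 : 0 ≤ Vr := ENNReal.toReal_nonneg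
  have hVrval : Vr = (2:ℝ)^n / ((n ! : ℕ) : ℝ) := by
    rw [hVr, hVval, ENNReal.toReal_div, ENNReal.toReal_ofReal (by positivity),
      ENNReal.toReal_ofReal (le_of_lt hfac0)]
  have hC1rval : C1r = (2:ℝ)^n * (2*n) / (((n+2)! : ℕ) : ℝ) := by
    rw [hC1r, hC1val, ENNReal.toReal_div, ENNReal.toReal_ofReal (by positivity),
      ENNReal.toReal_ofReal (le_of_lt hfac2)]
  have hC2rval : C2r = (2:ℝ)^n * (4*n*(n+5)) / (((n+4)! : ℕ) : ℝ) := by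
    rw [hC2r, hC2val, ENNReal.toReal_div, ENNReal.toReal_ofReal (by positivity),
      ENNReal.toReal_ofReal (le_of_lt hfac4)]
  have r1 : vK * (a - μ')^2 ≤ Yr := by
    have := (ENNReal.toReal_le_toReal (ENNReal.mul_ne_top hKtop ENNReal.ofReal_ne_top) hYtop).2 step1
    rwa [ENNReal.toReal_mul, ENNReal.toReal_ofReal (sq_nonneg _)] at this
  have r2 : Yr + (2*μ') * C1r = C2r + μ'^2 * Vr := by
    have := congrArg ENNReal.toReal step2
    rwa [ENNReal.toReal_add hYtop (ENNReal.mul_ne_top ENNReal.ofReal_ne_top hC1top),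
      ENNReal.toReal_add hC2top (ENNReal.mul_ne_top ENNReal.ofReal_ne_top hVtop),
      ENNReal.toReal_mul, ENNReal.toReal_mul,
      ENNReal.toReal_ofReal (by positivity), ENNReal.toReal_ofReal (sq_nonneg μ')] at this
  -- factorial expansions
  have hf2 : (((n+2)! : ℕ) : ℝ) = (x+2)*(x+1)*((n ! : ℕ) : ℝ) := by
    have : (n+2)! = (n+2)*((n+1)*(n)!) := by
      rw [show n + 2 = (n+1)+1 by ring, Nat.factorial_succ, Nat.factorial_succ]
    rw [this]
    push_cast
    ring
  have hf4 : (((n+4)! : ℕ) : ℝ) = (x+4)*(x+3)*(x+2)*(x+1)*((n ! : ℕ) : ℝ) := by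
    have : (n+4)! = (n+4)*((n+3)*((n+2)*((n+1)*(n)!))) := by
      rw [show n + 4 = (((n+1)+1)+1)+1 by ring, Nat.factorial_succ, Nat.factorial_succ,
        Nat.factorial_succ, Nat.factorial_succ]
    rw [this]
    push_cast
    ring
  set F : ℝ := ((n ! : ℕ) : ℝ) with hFdef
  have hF0 : 0 < F := hfac0
  set P : ℝ := (2:ℝ)^n with hPdef
  have hP0 : 0 < P := by positivity
  -- polynomial bound
  have core : 4*x*(x+5)/((x+4)*(x+3)*(x+2)*(x+1)) + 4/x^2 - 8/((x+2)*(x+1))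
      ≤ 344 / x^3 := by
    rw [← sub_nonneg]
    have h1 : 0 < x + 1 := by linarith
    have h2 : 0 < x + 2 := by linarith
    have h3 : 0 < x + 3 := by linarith
    have h4 : 0 < x + 4 := by linarith
    have key : 344 * ((x+1)*(x+2)*(x+3)*(x+4))
        - (4*x*(x+5) * x^3 + 4 * ((x+1)*(x+2)*(x+3)*(x+4)) * x
          - 8 * ((x+3)*(x+4)) * x^3) ≥ 0 := by nlinarith [sq_nonneg x, pow_pos hx0 3, pow_pos hx0 2]
    have expand : 344 / x^3 - (4*x*(x+5)/((x+4)*(x+3)*(x+2)*(x+1)) + 4/x^2 - 8/((x+2)*(x+1)))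
        = (344 * ((x+1)*(x+2)*(x+3)*(x+4))
          - (4*x*(x+5) * x^3 + 4 * ((x+1)*(x+2)*(x+3)*(x+4)) * x
            - 8 * ((x+3)*(x+4)) * x^3)) / (((x+4)*(x+3)*(x+2)*(x+1)) * x^3) := by
      field_simp
    rw [expand]
    positivity
  have hpoly : C2r + μ'^2 * Vr - (2*μ') * C1r ≤ 344 * Vr / x^3 := by
    rw [hC1rval, hC2rval, hVrval, hf2, hf4, hμ']
    have e1 : P * (4*(n:ℝ)*((n:ℝ)+5)) / ((x+4)*(x+3)*(x+2)*(x+1)*F)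
        + (2/x)^2 * (P/F) - 2*(2/x) * (P * (2*(n:ℝ)) / ((x+2)*(x+1)*F))
        = (P/F) * (4*x*(x+5)/((x+4)*(x+3)*(x+2)*(x+1)) + 4/x^2 - 8/((x+2)*(x+1))) := by
      rw [← hxdef]
      have h1 : (0:ℝ) < x + 1 := by linarith
      have h2 : (0:ℝ) < x + 2 := by linarith
      have h3 : (0:ℝ) < x + 3 := by linarith
      have h4 : (0:ℝ) < x + 4 := by linarith
      field_simp
      ring
    rw [e1]
    have e2 : 344 * (P/F) / x^3 = (P/F) * (344/x^3) := by ring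
    rw [e2]
    exact mul_le_mul_of_nonneg_left core (by positivity)
  -- combine
  have hchain : vK * (8*γ^2/x^2) ≤ 344 * Vr / x^3 := by
    have t1 : vK * (8*γ^2/x^2) ≤ vK * (a - μ')^2 :=
      mul_le_mul_of_nonneg_left haγ hvK0
    linarith [r1, r2, hpoly, t1]
  have hgx : 86 ≤ γ^2 * x := by
    rw [div_le_iff₀ (by positivity)] at hbig
    linarith
  have h3 : vK * (8*γ^2) * x ≤ 344 * Vr := by
    have h4 := mul_le_mul_of_nonneg_right hchain (le_of_lt (pow_pos hx0 3))
    have e1 : vK * (8*γ^2/x^2) * x^3 = vK * (8*γ^2) * x := by field_simp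
    have e2 : 344 * Vr / x^3 * x^3 = 344 * Vr := by field_simp
    linarith
  have hfinal : 2 * vK ≤ Vr := by
    nlinarith [mul_le_mul_of_nonneg_left hgx (show (0:ℝ) ≤ 8 * vK by linarith)]
  have h2K : 2 * volume K ≠ ∞ := ENNReal.mul_ne_top (by norm_num) hKtop
  refine (ENNReal.toReal_le_toReal h2K hVtop).1 ?_
  rw [ENNReal.toReal_mul]
  norm_num
  exact hfinal


lemma vol_Bpi (n : ℕ) :
    volume (Bpi n) = ENNReal.ofReal ((2:ℝ)^n) / ENNReal.ofReal ((n ! : ℕ) : ℝ) := by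
  have hfac0 : (0:ℝ) < ((n)! : ℕ) := by exact_mod_cast Nat.factorial_pos n
  exact (ENNReal.eq_div_iff (ne_of_gt (ENNReal.ofReal_pos.2 hfac0))
      ENNReal.ofReal_ne_top).2 (moment0 n)

lemma vol_Bpi_pos (n : ℕ) : 0 < volume (Bpi n) := by
  rw [vol_Bpi]
  apply ENNReal.div_pos
  · exact ne_of_gt (ENNReal.ofReal_pos.2 (by positivity))
  · exact ENNReal.ofReal_ne_top

lemma vol_Bpi_ne_top (n : ℕ) : volume (Bpi n) ≠ ∞ := by
  rw [vol_Bpi]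
  exact (ENNReal.div_lt_top ENNReal.ofReal_ne_top
    (ne_of_gt (ENNReal.ofReal_pos.2 (by exact_mod_cast Nat.factorial_pos n)))).ne

end CrossAux

open CrossAux

lemma volume_transfer {n : ℕ} {T : Set (Fin n → ℝ)} (hT : MeasurableSet T) :
    volume (((MeasurableEquiv.toLp 2 (Fin n → ℝ)).symm) ⁻¹' T) = volume T :=
  (EuclideanSpace.volume_preserving_symm_measurableEquiv_toLp (Fin n)).measure_preimage
    hT.nullMeasurableSet

lemma B1_eq_preimage (n : ℕ) :
    B1 n = ((MeasurableEquiv.toLp 2 (Fin n → ℝ)).symm) ⁻¹' (CrossAux.Bpi n) := rfl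

lemma volume_B1 (n : ℕ) : volume (B1 n) = volume (CrossAux.Bpi n) := by
  rw [B1_eq_preimage]
  exact volume_transfer measurableSet_Bpi

/-- For every `γ > 0` there is `n₀` such that for all `n ≥ n₀` and all
`s ≥ ((√2 + γ)/√n)·vol(B₂ⁿ)^{1/n}/vol(B₁ⁿ)^{1/n}`, the volume of
`(B₁ⁿ/vol(B₁ⁿ)^{1/n}) ∩ s(B₂ⁿ/vol(B₂ⁿ)^{1/n})` lies between `1/2` and `1`. -/
theorem volume_normCross_inter_normBall :
    ∀ γ > (0 : ℝ), ∃ n₀ : ℕ, ∀ n ≥ n₀, ∀ s : ℝ,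
      (Real.sqrt 2 + γ) / Real.sqrt n *
          (volume (B2 n)).toReal ^ (1 / (n : ℝ)) / (volume (B1 n)).toReal ^ (1 / (n : ℝ)) ≤ s →
      (1 / 2 : ℝ) ≤
          (volume ((((volume (B1 n)).toReal ^ (1 / (n : ℝ)))⁻¹ • B1 n) ∩
            s • (((volume (B2 n)).toReal ^ (1 / (n : ℝ)))⁻¹ • B2 n))).toReal ∧
        (volume ((((volume (B1 n)).toReal ^ (1 / (n : ℝ)))⁻¹ • B1 n) ∩
            s • (((volume (B2 n)).toReal ^ (1 / (n : ℝ)))⁻¹ • B2 n))).toReal ≤ 1 := by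
  intro γ hγ
  refine ⟨max 2 ⌈(86:ℝ) / γ^2⌉₊, fun n hn s hs => ?_⟩
  have hn2 : 2 ≤ n := le_trans (le_max_left _ _) hn
  have hnR : 86 / γ^2 ≤ (n:ℝ) := by
    have h := le_trans (le_max_right _ _) hn
    exact_mod_cast Nat.ceil_le.1 h
  have hn0 : (0:ℝ) < (n:ℝ) := by
    have : (2:ℝ) ≤ (n:ℝ) := by exact_mod_cast hn2
    linarith
  have hnne : (n:ℝ) ≠ 0 := ne_of_gt hn0
  have hsqrt2 : Real.sqrt 2 ^ 2 = 2 := Real.sq_sqrt (by norm_num)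
  have hsqrt2pos : (0:ℝ) < Real.sqrt 2 := Real.sqrt_pos.2 (by norm_num)
  have hsqrtn : Real.sqrt (n:ℝ) ^ 2 = (n:ℝ) := Real.sq_sqrt (le_of_lt hn0)
  have hsqrtnpos : (0:ℝ) < Real.sqrt (n:ℝ) := Real.sqrt_pos.2 hn0
  set a : ℝ := (Real.sqrt 2 + γ)^2 / (n:ℝ) with hadef
  have hsum2 : (2:ℝ) ≤ (Real.sqrt 2 + γ)^2 := by nlinarith [hsqrt2, hγ, hsqrt2pos]
  have ha : 2 / (n:ℝ) ≤ a := by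
    rw [hadef]
    gcongr
  have haγ : 8 * γ^2 / (n:ℝ)^2 ≤ (a - 2/(n:ℝ))^2 := by
    have e1 : a - 2/(n:ℝ) = (2*Real.sqrt 2*γ + γ^2)/(n:ℝ) := by
      rw [hadef, div_sub_div_same]
      congr 1
      nlinarith [hsqrt2]
    rw [e1, div_pow]
    gcongr
    have e2 : (2*Real.sqrt 2*γ + γ^2)^2 = 8*γ^2 + 4*Real.sqrt 2*γ^3 + γ^4 := by
      linear_combination (4*γ^2) * hsqrt2
    rw [e2]
    nlinarith [mul_nonneg hsqrt2pos.le (pow_nonneg hγ.le 3), pow_nonneg hγ.le 4]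
  have hcheb := CrossAux.chebyshev_pi hn2 hγ ha haγ hnR
  -- volumes of B1 and B2
  have hB1vol : volume (B1 n) = volume (CrossAux.Bpi n) := volume_B1 n
  have hB1pos : 0 < volume (B1 n) := hB1vol ▸ vol_Bpi_pos n
  have hB1top : volume (B1 n) ≠ ∞ := hB1vol ▸ vol_Bpi_ne_top n
  have hB2pos : 0 < volume (B2 n) := by
    rw [B2]
    exact Metric.measure_closedBall_pos volume 0 one_pos
  have hB2top : volume (B2 n) ≠ ∞ := (isCompact_closedBall (0 : EuclideanSpace ℝ (Fin n)) 1).measure_lt_top.ne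
  have hv₁pos : 0 < (volume (B1 n)).toReal := ENNReal.toReal_pos hB1pos.ne' hB1top
  have hv₂pos : 0 < (volume (B2 n)).toReal := ENNReal.toReal_pos hB2pos.ne' hB2top
  set v₁ : ℝ := (volume (B1 n)).toReal with hv₁def
  set v₂ : ℝ := (volume (B2 n)).toReal with hv₂def
  set c₁ : ℝ := v₁ ^ (1 / (n:ℝ)) with hc₁def
  set c₂ : ℝ := v₂ ^ (1 / (n:ℝ)) with hc₂def
  have hc₁pos : 0 < c₁ := Real.rpow_pos_of_pos hv₁pos _
  have hc₂pos : 0 < c₂ := Real.rpow_pos_of_pos hv₂pos _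
  have hspos : 0 < s :=
    lt_of_lt_of_le (by positivity) hs
  -- the intersection set
  have hsmul2 : s • ((c₂⁻¹ : ℝ) • B2 n) = Metric.closedBall (0 : EuclideanSpace ℝ (Fin n)) (s * c₂⁻¹) := by
    rw [smul_smul, B2, smul_closedBall _ _ zero_le_one, smul_zero, Real.norm_eq_abs,
      abs_of_pos (by positivity), mul_one]
  set t : ℝ := c₁ * (s * c₂⁻¹) with htdef
  have htpos : 0 < t := by positivity
  have hinter : ((c₁⁻¹ : ℝ) • B1 n) ∩ Metric.closedBall 0 (s * c₂⁻¹)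
      = (c₁⁻¹ : ℝ) • (B1 n ∩ Metric.closedBall 0 t) := by
    rw [Set.smul_set_inter₀ (inv_ne_zero hc₁pos.ne')]
    congr 1
    rw [smul_closedBall _ _ htpos.le, smul_zero, Real.norm_eq_abs,
      abs_of_pos (inv_pos.2 hc₁pos), htdef]
    congr 1
    field_simp
  have ht : (Real.sqrt 2 + γ) / Real.sqrt (n:ℝ) ≤ t := by
    rw [htdef]
    calc (Real.sqrt 2 + γ) / Real.sqrt (n:ℝ)
        = c₁ * ((Real.sqrt 2 + γ) / Real.sqrt (n:ℝ) * c₂ / c₁ * c₂⁻¹) := by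
          have h1 : c₁ ≠ 0 := hc₁pos.ne'
          have h2 : c₂ ≠ 0 := hc₂pos.ne'
          field_simp
      _ ≤ c₁ * (s * c₂⁻¹) := by
          gcongr
  -- scaling of volume
  have hscale : ∀ Z : Set (EuclideanSpace ℝ (Fin n)),
      volume ((c₁⁻¹ : ℝ) • Z) = ENNReal.ofReal ((c₁⁻¹)^n) * volume Z := by
    intro Z
    rw [Measure.addHaar_smul volume, finrank_euclideanSpace_fin,
      abs_of_nonneg (by positivity)]
  have hc₁pown : c₁ ^ (n:ℕ) = v₁ := by
    rw [hc₁def, ← Real.rpow_natCast (v₁ ^ (1/(n:ℝ))) n, ← Real.rpow_mul hv₁pos.le,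
      one_div, inv_mul_cancel₀ hnne, Real.rpow_one]
  have hSrw : ((c₁⁻¹ : ℝ) • B1 n) ∩ (s • ((c₂⁻¹ : ℝ) • B2 n))
      = (c₁⁻¹ : ℝ) • (B1 n ∩ Metric.closedBall 0 t) := by
    rw [hsmul2, hinter]
  -- the exceptional set
  set KE : Set (EuclideanSpace ℝ (Fin n)) :=
    ((MeasurableEquiv.toLp 2 (Fin n → ℝ)).symm) ⁻¹'
      {y : Fin n → ℝ | Npi y ≤ 1 ∧ a ≤ qpi y} with hKEdef
  have hKEvol : volume KE = volume {y : Fin n → ℝ | Npi y ≤ 1 ∧ a ≤ qpi y} :=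
    volume_transfer ((measurableSet_le Npi_continuous.measurable measurable_const).inter
      (measurableSet_le measurable_const qpi_continuous.measurable))
  have hsub : B1 n \ Metric.closedBall 0 t ⊆ KE := by
    intro x hx
    refine ⟨hx.1, ?_⟩
    have hxnorm : t < ‖x‖ := by
      have := hx.2
      rw [Metric.mem_closedBall, dist_zero_right] at this
      linarith [not_le.1 this]
    have hnormsq : ‖x‖^2 = qpi (((MeasurableEquiv.toLp 2 (Fin n → ℝ)).symm) x) := by
      rw [EuclideanSpace.norm_eq, Real.sq_sqrt (Finset.sum_nonneg fun i _ => sq_nonneg _)]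
      refine Finset.sum_congr rfl fun i _ => ?_
      rw [Real.norm_eq_abs, sq_abs]
      rfl
    have h1 : a ≤ t^2 := by
      have e2 : ((Real.sqrt 2 + γ) / Real.sqrt (n:ℝ))^2 = a := by
        rw [div_pow, hsqrtn, hadef]
      rw [← e2]
      exact pow_le_pow_left₀ (by positivity) ht 2
    have h2 : t^2 < ‖x‖^2 := by
      apply pow_lt_pow_left₀ hxnorm htpos.le
      norm_num
    rw [← hnormsq]
    show a ≤ ‖x‖^2
    linarith
  -- volume inequalities
  set I : ℝ≥0∞ := volume (B1 n ∩ Metric.closedBall 0 t) with hIdef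
  have hIle : I ≤ volume (B1 n) := measure_mono Set.inter_subset_left
  have hItop : I ≠ ∞ := (lt_of_le_of_lt hIle (lt_of_le_of_ne le_top hB1top)).ne
  have hKtop : volume KE ≠ ∞ := by
    rw [hKEvol]
    refine (lt_of_le_of_lt (measure_mono fun y hy => hy.1) ?_).ne
    exact lt_of_le_of_ne le_top (vol_Bpi_ne_top n)
  have hBsplit : volume (B1 n) ≤ I + volume KE := by
    calc volume (B1 n) ≤ volume ((B1 n ∩ Metric.closedBall 0 t) ∪ KE) := by
          apply measure_mono
          intro x hx
          by_cases h : x ∈ Metric.closedBall 0 t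
          · exact Or.inl ⟨hx, h⟩
          · exact Or.inr (hsub ⟨hx, h⟩)
      _ ≤ I + volume KE := measure_union_le _ _
  have hcheb2 : 2 * volume KE ≤ volume (B1 n) := by
    rw [hKEvol, hB1vol]
    exact hcheb
  -- to real numbers
  set Ir : ℝ := I.toReal with hIrdef
  set Kr : ℝ := (volume KE).toReal with hKrdef
  have hIr1 : v₁ ≤ Ir + Kr := by
    have h := (ENNReal.toReal_le_toReal hB1top (ENNReal.add_ne_top.2 ⟨hItop, hKtop⟩)).2 hBsplit
    rwa [ENNReal.toReal_add hItop hKtop] at h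
  have hIr2 : 2 * Kr ≤ v₁ := by
    have h := (ENNReal.toReal_le_toReal (ENNReal.mul_ne_top (by norm_num) hKtop) hB1top).2 hcheb2
    rwa [ENNReal.toReal_mul, ENNReal.toReal_ofNat] at h
  have hIrlow : v₁ / 2 ≤ Ir := by linarith
  have hIrhigh : Ir ≤ v₁ := (ENNReal.toReal_le_toReal hItop hB1top).2 hIle
  -- final volume value
  have hvolS : (volume (((c₁⁻¹ : ℝ) • B1 n) ∩ (s • ((c₂⁻¹ : ℝ) • B2 n)))).toReal
      = (c₁⁻¹)^n * Ir := by
    rw [hSrw, hscale, ENNReal.toReal_mul, ENNReal.toReal_ofReal (by positivity)]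
  have hc₁inv : (c₁⁻¹)^n * v₁ = 1 := by
    rw [inv_pow, hc₁pown]
    field_simp
  constructor
  · rw [hvolS]
    have : (c₁⁻¹)^n * (v₁/2) ≤ (c₁⁻¹)^n * Ir :=
      mul_le_mul_of_nonneg_left hIrlow (by positivity)
    have e : (c₁⁻¹)^n * (v₁/2) = 1/2 := by
      rw [mul_div_assoc'] 
      rw [show (c₁⁻¹)^n * v₁ / 2 = ((c₁⁻¹)^n * v₁) / 2 by ring, hc₁inv]
    linarith
  · rw [hvolS]
    calc (c₁⁻¹)^n * Ir ≤ (c₁⁻¹)^n * v₁ := mul_le_mul_of_nonneg_left hIrhigh (by positivity)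
      _ = 1 := hc₁inv
end
end
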